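/- arXiv:1109.3929 — 6 statements merged into one kernel-verified Lean document; each statement's English description precedes it below -/
import Mathlib

section
/- For the grid graph G_{n,2} = P_n □ P_2 with n ≥ 1, the total domination number satisfies γ_t(G_{n,2}) = 2⌊(n+2)/3⌋. -/
open SimpleGraph

/-- The grid graph `G_{n,m}`, the Cartesian (box) product of paths `P_n` and `P_m`. -/
def gridGraph (n m : ℕ) : SimpleGraph (Fin n × Fin m) :=
  (pathGraph n) □ (pathGraph m)

/-- `D` is a total dominating set of `G`: every vertex has a neighbor in `D`. -/
def IsTotalDomSet {V : Type*} (G : SimpleGraph V) (D : Set V) : Prop :=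
  ∀ v : V, ∃ u ∈ D, G.Adj v u

/-- The total domination number of `G`. -/
noncomputable def totalDomNum {V : Type*} [Fintype V] (G : SimpleGraph V) : ℕ :=
  sInf {k | ∃ D : Finset V, IsTotalDomSet G ↑D ∧ D.card = k}

/-- The total bondage number: the least number of edges whose removal increases
the total domination number. -/
noncomputable def totalBondage {V : Type*} [Fintype V] (G : SimpleGraph V) : ℕ :=
  sInf {k | ∃ F : Finset (Sym2 V), ↑F ⊆ G.edgeSet ∧ F.card = k ∧
    totalDomNum (G.deleteEdges ↑F) > totalDomNum G}

lemma grid_adj {n : ℕ} {a b : Fin n × Fin 2} :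
    (gridGraph n 2).Adj a b ↔
      ((a.1.val + 1 = b.1.val ∨ b.1.val + 1 = a.1.val) ∧ a.2.val = b.2.val) ∨
      ((a.2.val + 1 = b.2.val ∨ b.2.val + 1 = a.2.val) ∧ a.1.val = b.1.val) := by
  simp [gridGraph, boxProd_adj, pathGraph_adj, Fin.ext_iff]

lemma tdn_le {V : Type*} [Fintype V] (G : SimpleGraph V) (D : Finset V)
    (h : IsTotalDomSet G ↑D) : totalDomNum G ≤ D.card :=
  Nat.sInf_le ⟨D, h, rfl⟩

lemma univ_tds (n : ℕ) : IsTotalDomSet (gridGraph n 2) (Set.univ) := by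
  rintro ⟨i, j⟩
  refine ⟨(i, ⟨1 - j.val, by omega⟩), Set.mem_univ _, ?_⟩
  rw [grid_adj]
  right
  refine ⟨?_, rfl⟩
  have := j.is_lt
  dsimp only
  omega

lemma exists_min_tds (n : ℕ) :
    ∃ D : Finset (Fin n × Fin 2), IsTotalDomSet (gridGraph n 2) ↑D ∧
      D.card = totalDomNum (gridGraph n 2) := by
  have hne : {k | ∃ D : Finset (Fin n × Fin 2), IsTotalDomSet (gridGraph n 2) ↑D ∧
      D.card = k}.Nonempty :=
    ⟨(Finset.univ : Finset (Fin n × Fin 2)).card, Finset.univ, by simpa using univ_tds n, rfl⟩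
  obtain ⟨D, hD, hc⟩ := Nat.sInf_mem hne
  exact ⟨D, hD, hc⟩

lemma tdn_ge (n k : ℕ)
    (h : ∀ D : Finset (Fin n × Fin 2), IsTotalDomSet (gridGraph n 2) ↑D → k ≤ D.card) :
    k ≤ totalDomNum (gridGraph n 2) := by
  obtain ⟨D, hD, hc⟩ := exists_min_tds n
  exact hc ▸ h D hD

lemma two_le_card_tds {V : Type*} [DecidableEq V] {G : SimpleGraph V} {D : Finset V}
    (h : IsTotalDomSet G ↑D) (v : V) : 2 ≤ D.card := by
  obtain ⟨u, hu, _⟩ := h v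
  obtain ⟨w, hw, hadj⟩ := h u
  have hne : u ≠ w := G.ne_of_adj hadj
  have hsub : ({u, w} : Finset V) ⊆ D := by
    intro x hx
    simp only [Finset.mem_insert, Finset.mem_singleton] at hx
    rcases hx with rfl | rfl <;> simpa using ‹_›
  calc 2 = ({u, w} : Finset V).card := (Finset.card_pair hne).symm
    _ ≤ D.card := Finset.card_le_card hsub
lemma base_case (n : ℕ) (h1 : 1 ≤ n) (h3 : n ≤ 3) : totalDomNum (gridGraph n 2) = 2 := by
  have hc : min 1 (n - 1) < n := by omega
  set c : Fin n := ⟨min 1 (n - 1), hc⟩ with hcdef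
  have hcv : c.val = min 1 (n - 1) := rfl
  apply le_antisymm
  · refine le_trans (tdn_le _ {(c, 0), (c, 1)} ?_) ?_
    · rintro ⟨i, j⟩
      by_cases hij : i = c
      · subst hij
        refine ⟨(c, ⟨1 - j.val, by omega⟩), ?_, ?_⟩
        · have := j.is_lt
          simp only [Finset.coe_insert, Finset.coe_singleton, Set.mem_insert_iff,
            Set.mem_singleton_iff, Prod.ext_iff, Fin.ext_iff]
          norm_num
          omega
        · rw [grid_adj]
          right
          refine ⟨?_, rfl⟩
          have := j.is_lt
          dsimp only
          omega
      · refine ⟨(c, j), ?_, ?_⟩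
        · have := j.is_lt
          simp only [Finset.coe_insert, Finset.coe_singleton, Set.mem_insert_iff,
            Set.mem_singleton_iff, Prod.ext_iff, Fin.ext_iff]
          norm_num
          omega
        · rw [grid_adj]
          left
          refine ⟨?_, rfl⟩
          have h1 : i.val ≠ c.val := fun e => hij (Fin.ext e)
          have h2 := i.is_lt
          dsimp only
          omega
    · refine le_trans (Finset.card_insert_le _ _) ?_
      simp
  · exact tdn_ge n 2 (fun D hD => two_le_card_tds hD ((⟨0, by omega⟩ : Fin n), 0))

lemma step_le (n : ℕ) :
    totalDomNum (gridGraph (n + 3) 2) ≤ totalDomNum (gridGraph n 2) + 2 := by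
  obtain ⟨D, hD, hcard⟩ := exists_min_tds n
  rw [← hcard]
  set c : Fin (n + 3) := ⟨n + 1, by omega⟩ with hcdef
  have hcv : c.val = n + 1 := rfl
  set D' : Finset (Fin (n + 3) × Fin 2) :=
    D.image (fun v => ((v.1.castAdd 3 : Fin (n + 3)), v.2)) ∪ {(c, 0), (c, 1)} with hD'def
  refine le_trans (tdn_le _ D' ?_) ?_
  · rintro ⟨i, j⟩
    by_cases hi : i.val < n
    · obtain ⟨u, hu, hadj⟩ := hD ((⟨i.val, hi⟩ : Fin n), j)
      refine ⟨((u.1.castAdd 3 : Fin (n + 3)), u.2), ?_, ?_⟩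
      · simp only [hD'def, Finset.coe_union, Set.mem_union, Finset.coe_image, Set.mem_image,
          Finset.mem_coe]
        exact Or.inl ⟨u, hu, rfl⟩
      · rw [grid_adj] at hadj ⊢
        simpa using hadj
    · by_cases hi2 : i.val = n + 1
      · refine ⟨(c, ⟨1 - j.val, by omega⟩), ?_, ?_⟩
        · have := j.is_lt
          simp only [hD'def, Finset.coe_union, Set.mem_union, Finset.coe_insert,
            Finset.coe_singleton, Set.mem_insert_iff, Set.mem_singleton_iff, Prod.ext_iff,
            Fin.ext_iff]
          right
          norm_num
          omega
        · rw [grid_adj]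
          right
          have := j.is_lt
          constructor
          · dsimp only
            omega
          · dsimp only [hcdef]
            omega
      · refine ⟨(c, j), ?_, ?_⟩
        · have := j.is_lt
          simp only [hD'def, Finset.coe_union, Set.mem_union, Finset.coe_insert,
            Finset.coe_singleton, Set.mem_insert_iff, Set.mem_singleton_iff, Prod.ext_iff,
            Fin.ext_iff]
          right
          norm_num
          omega
        · rw [grid_adj]
          left
          refine ⟨?_, rfl⟩
          have := i.is_lt
          dsimp only [hcdef]
          omega
  · refine le_trans (Finset.card_union_le _ _) ?_
    have h1 : (D.image (fun v : Fin n × Fin 2 => ((v.1.castAdd 3 : Fin (n + 3)), v.2))).card ≤ D.card :=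
      Finset.card_image_le
    have h2 : ({(c, (0 : Fin 2)), (c, 1)} : Finset (Fin (n + 3) × Fin 2)).card ≤ 2 :=
      Finset.card_insert_le _ _ |>.trans (by simp)
    omega
lemma step_ge (n : ℕ) (hn : 1 ≤ n) :
    totalDomNum (gridGraph n 2) + 2 ≤ totalDomNum (gridGraph (n + 3) 2) := by
  obtain ⟨D, hD, hcard⟩ := exists_min_tds (n + 3)
  rw [← hcard]
  classical
  set B : Finset (Fin n × Fin 2) :=
    Finset.univ.filter (fun v : Fin n × Fin 2 => ((v.1.castAdd 3 : Fin (n + 3)), v.2) ∈ D)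
    with hBdef
  set A : Finset (Fin (n + 3) × Fin 2) := D.filter (fun v => ¬ v.1.val < n) with hAdef
  -- B and A partition D by cardinality
  have hBcard : B.card = (D.filter (fun v => v.1.val < n)).card := by
    apply Finset.card_bij (fun v _ => ((v.1.castAdd 3 : Fin (n + 3)), v.2))
    · intro a ha
      simp only [hBdef, Finset.mem_filter, Finset.mem_univ, true_and] at ha
      simp only [Finset.mem_filter]
      exact ⟨ha, by simpa using a.1.is_lt⟩
    · intro a _ b _ h
      rw [Prod.ext_iff] at h ⊢
      obtain ⟨h1, h2⟩ := h
      rw [Fin.ext_iff] at h1 ⊢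
      simpa using ⟨h1, h2⟩
    · intro w hw
      simp only [Finset.mem_filter] at hw
      refine ⟨((⟨w.1.val, hw.2⟩ : Fin n), w.2), ?_, ?_⟩
      · simp only [hBdef, Finset.mem_filter, Finset.mem_univ, true_and]
        have : ((((⟨w.1.val, hw.2⟩ : Fin n)).castAdd 3 : Fin (n + 3)), w.2) = w := by
          rw [Prod.ext_iff, Fin.ext_iff]
          exact ⟨by simp, rfl⟩
        rw [this]
        exact hw.1
      · rw [Prod.ext_iff, Fin.ext_iff]
        exact ⟨by simp, rfl⟩
  have hBA : B.card + A.card = D.card := by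
    rw [hBcard, hAdef]
    exact Finset.card_filter_add_card_filter_not _
  -- dominators of column n+2
  obtain ⟨u1, hu1D, hu1adj⟩ := hD ((⟨n + 2, by omega⟩ : Fin (n + 3)), 0)
  obtain ⟨u2, hu2D, hu2adj⟩ := hD ((⟨n + 2, by omega⟩ : Fin (n + 3)), 1)
  rw [grid_adj] at hu1adj hu2adj
  have hlt1 := u1.1.is_lt
  have hlt1' := u1.2.is_lt
  have hlt2 := u2.1.is_lt
  have hlt2' := u2.2.is_lt
  have P1' : ((n + 2 + 1 = u1.1.val ∨ u1.1.val + 1 = n + 2) ∧ 0 = u1.2.val) ∨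
      ((0 + 1 = u1.2.val ∨ u1.2.val + 1 = 0) ∧ n + 2 = u1.1.val) := hu1adj
  have P2' : ((n + 2 + 1 = u2.1.val ∨ u2.1.val + 1 = n + 2) ∧ 1 = u2.2.val) ∨
      ((1 + 1 = u2.2.val ∨ u2.2.val + 1 = 1) ∧ n + 2 = u2.1.val) := hu2adj
  clear hu1adj hu2adj
  have P1 : (u1.1.val = n + 1 ∧ u1.2.val = 0) ∨ (u1.1.val = n + 2 ∧ u1.2.val = 1) := by
    omega
  have P2 : (u2.1.val = n + 1 ∧ u2.2.val = 1) ∨ (u2.1.val = n + 2 ∧ u2.2.val = 0) := by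
    omega
  have hu1A : u1 ∈ A := Finset.mem_filter.mpr ⟨hu1D, by omega⟩
  have hu2A : u2 ∈ A := Finset.mem_filter.mpr ⟨hu2D, by omega⟩
  have hne12 : u1 ≠ u2 := by
    intro e
    rw [Prod.ext_iff, Fin.ext_iff, Fin.ext_iff] at e
    omega
  set l : Fin n := ⟨n - 1, by omega⟩ with hldef
  have hlval : l.val = n - 1 := rfl
  set vn : Fin 2 → Fin (n + 3) × Fin 2 := fun j => ((⟨n, by omega⟩ : Fin (n + 3)), j) with hvndef
  have hvnval : ∀ j : Fin 2, (vn j).1.val = n := fun _ => rfl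
  have hne_u1vn : ∀ j : Fin 2, u1 ≠ vn j := by
    intro j e
    have : u1.1.val = n := by rw [e]
    omega
  have hne_u2vn : ∀ j : Fin 2, u2 ≠ vn j := by
    intro j e
    have : u2.1.val = n := by rw [e]
    omega
  have hne_vn01 : vn 0 ≠ vn 1 := by
    intro e
    exact Nat.zero_ne_one (congrArg (fun x => x.2.val) e)
  -- the main TDS construction
  have main : ∀ E : Finset (Fin n × Fin 2),
      (∀ j : Fin 2, vn j ∈ D → ((l, (⟨1 - j.val, by omega⟩ : Fin 2)) ∈ E)) →
      IsTotalDomSet (gridGraph n 2) ↑(B ∪ E) := by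
    intro E hE
    rintro ⟨i, j⟩
    obtain ⟨u, huD, huadj⟩ := hD ((i.castAdd 3 : Fin (n + 3)), j)
    rw [grid_adj] at huadj
    simp only [Fin.coe_castAdd] at huadj
    have hilt := i.is_lt
    have hult := u.1.is_lt
    have hult' := u.2.is_lt
    have hjlt := j.is_lt
    by_cases hu : u.1.val < n
    · refine ⟨((⟨u.1.val, hu⟩ : Fin n), u.2), ?_, ?_⟩
      · have hmem : ((⟨u.1.val, hu⟩ : Fin n), u.2) ∈ B := by
          simp only [hBdef, Finset.mem_filter, Finset.mem_univ, true_and]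
          have : ((((⟨u.1.val, hu⟩ : Fin n)).castAdd 3 : Fin (n + 3)), u.2) = u := by
            rw [Prod.ext_iff, Fin.ext_iff]
            exact ⟨by simp, rfl⟩
          rw [this]
          exact huD
        exact Finset.mem_coe.mpr (Finset.mem_union_left _ hmem)
      · rw [grid_adj]
        dsimp only
        omega
    · -- u is in column n, u = vn j, and i.val = n - 1
      have hcol : u.1.val = n := by omega
      have hrow : u.2.val = j.val := by omega
      have hival : i.val = n - 1 := by omega
      have huvn : u = vn j := by
        rw [hvndef, Prod.ext_iff, Fin.ext_iff, Fin.ext_iff]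
        exact ⟨hcol, hrow⟩
      have hmem : ((l, (⟨1 - j.val, by omega⟩ : Fin 2)) ∈ E) := hE j (huvn ▸ huD)
      refine ⟨(l, (⟨1 - j.val, by omega⟩ : Fin 2)), ?_, ?_⟩
      · exact Finset.mem_coe.mpr (Finset.mem_union_right _ hmem)
      · rw [grid_adj]
        right
        dsimp only
        omega
  by_cases h0 : vn 0 ∈ D <;> by_cases h1 : vn 1 ∈ D
  · -- both in D
    have hvn0A : vn 0 ∈ A := Finset.mem_filter.mpr ⟨h0, by rw [hvnval]; omega⟩
    have hvn1A : vn 1 ∈ A := Finset.mem_filter.mpr ⟨h1, by rw [hvnval]; omega⟩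
    have hsub : ({u1, u2, vn 0, vn 1} : Finset (Fin (n + 3) × Fin 2)) ⊆ A := by
      intro x hx
      simp only [Finset.mem_insert, Finset.mem_singleton] at hx
      rcases hx with rfl | rfl | rfl | rfl <;> assumption
    have hdist : ({u1, u2, vn 0, vn 1} : Finset (Fin (n + 3) × Fin 2)).card = 4 := by
      rw [Finset.card_insert_of_notMem, Finset.card_insert_of_notMem, Finset.card_pair hne_vn01]
      · simp only [Finset.mem_insert, Finset.mem_singleton]
        push_neg
        exact ⟨hne_u2vn 0, hne_u2vn 1⟩
      · simp only [Finset.mem_insert, Finset.mem_singleton]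
        push_neg
        exact ⟨hne12, hne_u1vn 0, hne_u1vn 1⟩
    have hA4 : 4 ≤ A.card := le_trans (le_of_eq hdist.symm) (Finset.card_le_card hsub)
    have htds := main {(l, 1), (l, 0)} ?_
    · refine le_trans (add_le_add_left (tdn_le _ _ htds) 2) ?_
      have hc2 : ({((l : Fin n), (1 : Fin 2)), (l, 0)} : Finset (Fin n × Fin 2)).card ≤ 2 :=
        le_trans (Finset.card_insert_le _ _) (by simp)
      have hc1 := Finset.card_union_le B ({((l : Fin n), (1 : Fin 2)), (l, 0)} : Finset (Fin n × Fin 2))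
      omega
    · intro j hj
      have := j.is_lt
      simp only [Finset.mem_insert, Finset.mem_singleton, Prod.ext_iff, Fin.ext_iff]
      norm_num
      omega
  · -- only vn 0 in D
    have hvn0A : vn 0 ∈ A := Finset.mem_filter.mpr ⟨h0, by rw [hvnval]; omega⟩
    have hsub : ({u1, u2, vn 0} : Finset (Fin (n + 3) × Fin 2)) ⊆ A := by
      intro x hx
      simp only [Finset.mem_insert, Finset.mem_singleton] at hx
      rcases hx with rfl | rfl | rfl <;> assumption
    have hdist : ({u1, u2, vn 0} : Finset (Fin (n + 3) × Fin 2)).card = 3 := by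
      rw [Finset.card_insert_of_notMem, Finset.card_pair (hne_u2vn 0)]
      simp only [Finset.mem_insert, Finset.mem_singleton]
      push_neg
      exact ⟨hne12, hne_u1vn 0⟩
    have hA3 : 3 ≤ A.card := le_trans (le_of_eq hdist.symm) (Finset.card_le_card hsub)
    have htds := main {(l, 1)} ?_
    · refine le_trans (add_le_add_left (tdn_le _ _ htds) 2) ?_
      have hc1 : (B ∪ {(l, 1)} : Finset (Fin n × Fin 2)).card ≤ B.card + 1 :=
        le_trans (Finset.card_union_le _ _) (by simp)
      omega
    · intro j hj
      have hj2 := j.is_lt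
      have hj0 : j = 0 := by
        by_contra hne
        have : j = 1 := by
          rw [Fin.ext_iff]
          rw [Fin.ext_iff] at hne
          norm_num at hne ⊢
          omega
        exact h1 (this ▸ hj)
      subst hj0
      simp only [Finset.mem_singleton, Prod.ext_iff, Fin.ext_iff]
      norm_num
  · -- only vn 1 in D
    have hvn1A : vn 1 ∈ A := Finset.mem_filter.mpr ⟨h1, by rw [hvnval]; omega⟩
    have hsub : ({u1, u2, vn 1} : Finset (Fin (n + 3) × Fin 2)) ⊆ A := by
      intro x hx
      simp only [Finset.mem_insert, Finset.mem_singleton] at hx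
      rcases hx with rfl | rfl | rfl <;> assumption
    have hdist : ({u1, u2, vn 1} : Finset (Fin (n + 3) × Fin 2)).card = 3 := by
      rw [Finset.card_insert_of_notMem, Finset.card_pair (hne_u2vn 1)]
      simp only [Finset.mem_insert, Finset.mem_singleton]
      push_neg
      exact ⟨hne12, hne_u1vn 1⟩
    have hA3 : 3 ≤ A.card := le_trans (le_of_eq hdist.symm) (Finset.card_le_card hsub)
    have htds := main {(l, 0)} ?_
    · refine le_trans (add_le_add_left (tdn_le _ _ htds) 2) ?_
      have hc1 : (B ∪ {(l, 0)} : Finset (Fin n × Fin 2)).card ≤ B.card + 1 :=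
        le_trans (Finset.card_union_le _ _) (by simp)
      omega
    · intro j hj
      have hj2 := j.is_lt
      have hj1 : j = 1 := by
        by_contra hne
        have : j = 0 := by
          rw [Fin.ext_iff]
          rw [Fin.ext_iff] at hne
          norm_num at hne ⊢
          omega
        exact h0 (this ▸ hj)
      subst hj1
      simp only [Finset.mem_singleton, Prod.ext_iff, Fin.ext_iff]
      norm_num
  · -- neither in D
    have hA2 : 2 ≤ A.card := by
      have hsub : ({u1, u2} : Finset (Fin (n + 3) × Fin 2)) ⊆ A := by
        intro x hx
        simp only [Finset.mem_insert, Finset.mem_singleton] at hx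
        rcases hx with rfl | rfl <;> assumption
      calc 2 = ({u1, u2} : Finset (Fin (n + 3) × Fin 2)).card := (Finset.card_pair hne12).symm
        _ ≤ A.card := Finset.card_le_card hsub
    have htds := main ∅ ?_
    · rw [Finset.union_empty] at htds
      refine le_trans (add_le_add_left (tdn_le _ _ htds) 2) ?_
      omega
    · intro j hj
      exfalso
      have := j.is_lt
      have : j = 0 ∨ j = 1 := by
        rw [Fin.ext_iff, Fin.ext_iff]
        norm_num
        omega
      rcases this with rfl | rfl
      · exact h0 hj
      · exact h1 hj
theorem total_domination_grid_two (n : ℕ) (hn : 1 ≤ n) :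
    totalDomNum (gridGraph n 2) = 2 * ((n + 2) / 3) := by
  clear hn
  induction n using Nat.strong_induction_on with
  | _ n ih =>
    match n, ih with
    | 0, _ => 
      have h0 : IsTotalDomSet (gridGraph 0 2) ↑(∅ : Finset (Fin 0 × Fin 2)) := by
        rintro ⟨i, j⟩
        exact i.elim0
      have := tdn_le (gridGraph 0 2) ∅ h0
      simp only [Finset.card_empty, Nat.le_zero] at this
      rw [this]
    | 1, _ => rw [base_case 1 (by omega) (by omega)]
    | 2, _ => rw [base_case 2 (by omega) (by omega)]
    | 3, _ => rw [base_case 3 (by omega) (by omega)]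
    | (m + 4), ih =>
      have h := ih (m + 1) (by omega)
      have heq : totalDomNum (gridGraph (m + 1 + 3) 2) =
          totalDomNum (gridGraph (m + 1) 2) + 2 :=
        le_antisymm (step_le (m + 1)) (step_ge (m + 1) (by omega))
      have hidx : m + 4 = m + 1 + 3 := by omega
      rw [hidx, heq, h]
      omega
end

section
/- For the grid graph G_{n,3} = P_n □ P_3 with n ≥ 2, the total domination number satisfies γ_t(G_{n,3}) = n. -/
open SimpleGraph

namespace TDGrid3

abbrev Col := Bool × Bool × Bool

def wcol (q : Col) : ℕ := q.1.toNat + q.2.1.toNat + q.2.2.toNat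

def subCol (U q : Col) : Bool := (!U.1 || q.1) && (!U.2.1 || q.2.1) && (!U.2.2 || q.2.2)

def newU (p q : Col) : Col :=
  (!(p.1 || q.2.1), !(p.2.1 || (q.1 || q.2.2)), !(p.2.2 || q.2.1))

def validL : Col → Col → List Col → Bool
  | _, U, [] => U = ((false, false, false) : Col)
  | p, U, q :: rest => subCol U q && validL q (newU p q) rest

def idx (q : Col) : ℕ := q.1.toNat + 2 * q.2.1.toNat + 4 * q.2.2.toNat

def psiTable : List ℕ :=
  [1, 1, 1, 1, 1, 0, 1, 0, 2, 2, 2, 2, 2, 1, 2, 2, 1, 2, 1, 2, 2, 2, 2, 2, 2, 2, 2, 2, 2, 2, 2, 2, 2, 2, 2, 2, 2, 1, 2, 2, 2, 2, 2, 2, 2, 1, 2, 2, 2, 2, 2, 2, 2, 2, 2, 2, 2, 2, 2, 2, 2, 2, 2, 2]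

def psi (p U : Col) : ℕ := psiTable.getD (idx p * 8 + idx U) 0

lemma psi_step : ∀ p U q : Col, subCol U q = true →
    psi q (newU p q) + 1 ≤ wcol q + psi p U := by decide

lemma psi_base : ∀ p : Col, 1 ≤ psi p (false, false, false) := by decide

lemma validL_length : ∀ (l : List Col) (p U : Col), validL p U l = true →
    l.length + 1 ≤ (l.map wcol).sum + psi p U := by
  intro l
  induction l with
  | nil =>
    intro p U h
    simp only [validL, decide_eq_true_eq] at h
    subst h
    simpa using psi_base p
  | cons q rest ih =>
    intro p U h
    simp only [validL, Bool.and_eq_true] at h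
    have h1 := psi_step p U q h.1
    have h2 := ih q (newU p q) h.2
    simp only [List.length_cons, List.map_cons, List.sum_cons]
    omega

lemma validL_length' (l : List Col)
    (h : validL (false, false, false) (false, false, false) l = true) :
    l.length ≤ (l.map wcol).sum := by
  have := validL_length l _ _ h
  have hpsi : psi (false, false, false) (false, false, false) = 1 := by decide
  omega


variable {n : ℕ}

def gcol (D : Finset (Fin n × Fin 3)) (i : ℕ) : Col :=
  if h : i < n then
    (decide ((⟨i, h⟩, (0 : Fin 3)) ∈ D), decide ((⟨i, h⟩, (1 : Fin 3)) ∈ D),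
      decide ((⟨i, h⟩, (2 : Fin 3)) ∈ D))
  else (false, false, false)

lemma gcol_of_mem {D : Finset (Fin n × Fin 3)} {i : ℕ} {u : Fin n × Fin 3}
    (hu : u ∈ D) (h1 : u.1.val = i) :
    (u.2 = 0 → (gcol D i).1 = true) ∧ (u.2 = 1 → (gcol D i).2.1 = true) ∧
      (u.2 = 2 → (gcol D i).2.2 = true) := by
  have hi : i < n := h1 ▸ u.1.isLt
  have hfin : (⟨i, hi⟩ : Fin n) = u.1 := Fin.ext h1.symm
  refine ⟨fun h2 => ?_, fun h2 => ?_, fun h2 => ?_⟩ <;>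
  · simp only [gcol, dif_pos hi, decide_eq_true_eq]
    have : ((⟨i, hi⟩ : Fin n), u.2) = u := Prod.ext hfin rfl
    rw [h2] at this
    rwa [this]

lemma adj_cases {i : Fin n} {j : Fin 3} {u : Fin n × Fin 3}
    (h : (gridGraph n 3).Adj (i, j) u) :
    ((u.1 : ℕ) = (i : ℕ) + 1 ∧ u.2 = j) ∨ ((u.1 : ℕ) + 1 = (i : ℕ) ∧ u.2 = j) ∨
      (u.1 = i ∧ (u.2 : ℕ) = (j : ℕ) + 1) ∨ (u.1 = i ∧ (u.2 : ℕ) + 1 = (j : ℕ)) := by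
  rw [gridGraph, boxProd_adj, pathGraph_adj, pathGraph_adj] at h
  have h' : (((i : ℕ) + 1 = (u.1 : ℕ) ∨ (u.1 : ℕ) + 1 = (i : ℕ)) ∧ j = u.2) ∨
      (((j : ℕ) + 1 = (u.2 : ℕ) ∨ (u.2 : ℕ) + 1 = (j : ℕ)) ∧ i = u.1) := h
  rcases h' with ⟨h1 | h1, h2⟩ | ⟨h1 | h1, h2⟩
  · exact Or.inl ⟨h1.symm, h2.symm⟩
  · exact Or.inr (Or.inl ⟨h1, h2.symm⟩)
  · exact Or.inr (Or.inr (Or.inl ⟨h2.symm, h1.symm⟩))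
  · exact Or.inr (Or.inr (Or.inr ⟨h2.symm, h1⟩))

/-- The three domination conditions for column `i`. -/
lemma dom_cond {D : Finset (Fin n × Fin 3)} (hD : IsTotalDomSet (gridGraph n 3) ↑D)
    {i : ℕ} (hi : i < n) :
    ((gcol D i).2.1 = true ∨ (0 < i ∧ (gcol D (i - 1)).1 = true) ∨ (gcol D (i + 1)).1 = true) ∧
    ((gcol D i).1 = true ∨ (gcol D i).2.2 = true ∨ (0 < i ∧ (gcol D (i - 1)).2.1 = true) ∨
      (gcol D (i + 1)).2.1 = true) ∧
    ((gcol D i).2.1 = true ∨ (0 < i ∧ (gcol D (i - 1)).2.2 = true) ∨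
      (gcol D (i + 1)).2.2 = true) := by
  refine ⟨?_, ?_, ?_⟩
  · obtain ⟨u, hu, hadj⟩ := hD (⟨i, hi⟩, (0 : Fin 3))
    rcases adj_cases hadj with ⟨h1, h2⟩ | ⟨h1, h2⟩ | ⟨h1, h2⟩ | ⟨h1, h2⟩
    · exact Or.inr (Or.inr ((gcol_of_mem hu h1).1 h2))
    · exact Or.inr (Or.inl ⟨by simp at h1; omega, (gcol_of_mem hu (by simp at h1 ⊢; omega)).1 h2⟩)
    · exact Or.inl ((gcol_of_mem hu (by simp [h1])).2.1 (Fin.ext (by simpa using h2)))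
    · simp at h2
  · obtain ⟨u, hu, hadj⟩ := hD (⟨i, hi⟩, (1 : Fin 3))
    rcases adj_cases hadj with ⟨h1, h2⟩ | ⟨h1, h2⟩ | ⟨h1, h2⟩ | ⟨h1, h2⟩
    · exact Or.inr <| Or.inr <| Or.inr ((gcol_of_mem hu h1).2.1 h2)
    · exact Or.inr <| Or.inr <| Or.inl
        ⟨by simp at h1; omega, (gcol_of_mem hu (by simp at h1 ⊢; omega)).2.1 h2⟩
    · exact Or.inr <| Or.inl <| (gcol_of_mem hu (by simp [h1])).2.2 (Fin.ext (by simpa using h2))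
    · exact Or.inl <| (gcol_of_mem hu (by simp [h1])).1 (Fin.ext (by simpa using h2))
  · obtain ⟨u, hu, hadj⟩ := hD (⟨i, hi⟩, (2 : Fin 3))
    rcases adj_cases hadj with ⟨h1, h2⟩ | ⟨h1, h2⟩ | ⟨h1, h2⟩ | ⟨h1, h2⟩
    · exact Or.inr (Or.inr ((gcol_of_mem hu h1).2.2 h2))
    · exact Or.inr (Or.inl ⟨by simp at h1; omega, (gcol_of_mem hu (by simp at h1 ⊢; omega)).2.2 h2⟩)
    · exact absurd h2 (by simp; omega)
    · exact Or.inl ((gcol_of_mem hu (by simp [h1])).2.1 (Fin.ext (by simpa using h2)))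


def gp (D : Finset (Fin n × Fin 3)) (s : ℕ) : Col :=
  if s = 0 then (false, false, false) else gcol D (s - 1)

def gU (D : Finset (Fin n × Fin 3)) (s : ℕ) : Col :=
  if s = 0 then (false, false, false) else newU (gp D (s - 1)) (gcol D (s - 1))

lemma gcol_oob (D : Finset (Fin n × Fin 3)) {i : ℕ} (h : ¬ i < n) :
    gcol D i = (false, false, false) := dif_neg h

/-- `dom_cond` reformulated via `gp`. -/
lemma dom_cond' {D : Finset (Fin n × Fin 3)} (hD : IsTotalDomSet (gridGraph n 3) ↑D)
    {i : ℕ} (hi : i < n) :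
    ((gcol D i).2.1 = true ∨ (gp D i).1 = true ∨ (gcol D (i + 1)).1 = true) ∧
    ((gcol D i).1 = true ∨ (gcol D i).2.2 = true ∨ (gp D i).2.1 = true ∨
      (gcol D (i + 1)).2.1 = true) ∧
    ((gcol D i).2.1 = true ∨ (gp D i).2.2 = true ∨ (gcol D (i + 1)).2.2 = true) := by
  obtain ⟨h1, h2, h3⟩ := dom_cond hD hi
  have hgp : 0 < i → gp D i = gcol D (i - 1) := by
    intro h; simp [gp, Nat.pos_iff_ne_zero.mp h]
  refine ⟨?_, ?_, ?_⟩
  · rcases h1 with h | ⟨h0, h⟩ | h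
    · exact Or.inl h
    · exact Or.inr (Or.inl (by rw [hgp h0]; exact h))
    · exact Or.inr (Or.inr h)
  · rcases h2 with h | h | ⟨h0, h⟩ | h
    · exact Or.inl h
    · exact Or.inr (Or.inl h)
    · exact Or.inr (Or.inr (Or.inl (by rw [hgp h0]; exact h)))
    · exact Or.inr (Or.inr (Or.inr h))
  · rcases h3 with h | ⟨h0, h⟩ | h
    · exact Or.inl h
    · exact Or.inr (Or.inl (by rw [hgp h0]; exact h))
    · exact Or.inr (Or.inr h)

lemma subCol_newU_of : ∀ pp p q : Col,
    (p.2.1 = true ∨ pp.1 = true ∨ q.1 = true) →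
    (p.1 = true ∨ p.2.2 = true ∨ pp.2.1 = true ∨ q.2.1 = true) →
    (p.2.1 = true ∨ pp.2.2 = true ∨ q.2.2 = true) →
    subCol (newU pp p) q = true := by decide

lemma subCol_false : ∀ q : Col, subCol (false, false, false) q = true := by decide

lemma newU_empty : ∀ pp p : Col,
    (p.2.1 = true ∨ pp.1 = true ∨ (false, false, false).1 = true) →
    (p.1 = true ∨ p.2.2 = true ∨ pp.2.1 = true ∨ ((false, false, false) : Col).2.1 = true) →
    (p.2.1 = true ∨ pp.2.2 = true ∨ ((false, false, false) : Col).2.2 = true) →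
    newU pp p = (false, false, false) := by decide

lemma toValid {D : Finset (Fin n × Fin 3)} (hD : IsTotalDomSet (gridGraph n 3) ↑D)
    (k s : ℕ) (hs : s + k = n) :
    validL (gp D s) (gU D s) ((List.range' s k).map (gcol D)) = true := by
  induction k generalizing s with
  | zero =>
    simp only [List.range'_zero, List.map_nil, validL, decide_eq_true_eq]
    by_cases h0 : s = 0
    · simp [gU, h0]
    · have hi : s - 1 < n := by omega
      have hc := dom_cond' hD hi
      rw [show s - 1 + 1 = s from by omega, show s = n from by omega,
        gcol_oob D (lt_irrefl n)] at hc
      simp only [gU, show s = n from by omega, if_neg (show ¬n = 0 from by omega)]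
      exact newU_empty _ _ hc.1 hc.2.1 hc.2.2
  | succ k ih =>
    rw [List.range'_succ, List.map_cons]
    show (subCol (gU D s) (gcol D s) && validL (gcol D s) (newU (gp D s) (gcol D s)) _) = true
    rw [Bool.and_eq_true]
    constructor
    · by_cases h0 : s = 0
      · rw [show gU D s = (false, false, false) from by simp [gU, h0]]
        exact subCol_false _
      · have hi : s - 1 < n := by omega
        have hc := dom_cond' hD hi
        rw [show s - 1 + 1 = s from by omega] at hc
        rw [show gU D s = newU (gp D (s - 1)) (gcol D (s - 1)) from by simp [gU, h0]]
        exact subCol_newU_of _ _ _ hc.1 hc.2.1 hc.2.2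
    · have := ih (s + 1) (by omega)
      rw [show gp D (s + 1) = gcol D s from by simp [gp],
        show gU D (s + 1) = newU (gp D s) (gcol D s) from by simp [gU, gp]] at this
      exact this

lemma list_range_sum (f : ℕ → ℕ) (m : ℕ) :
    ((List.range m).map f).sum = ∑ i ∈ Finset.range m, f i := by
  induction m with
  | zero => simp
  | succ m ih => simp [List.range_succ, Finset.sum_range_succ, ih]

lemma card_eq (D : Finset (Fin n × Fin 3)) :
    D.card = ∑ i ∈ Finset.range n, wcol (gcol D i) := by
  have h1 : D.card = ∑ v : Fin n × Fin 3, if v ∈ D then 1 else 0 := by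
    rw [Finset.sum_boole]
    simp [Finset.filter_univ_mem]
  rw [h1, Fintype.sum_prod_type, ← Fin.sum_univ_eq_sum_range (fun i => wcol (gcol D i))]
  refine Finset.sum_congr rfl fun i _ => ?_
  rw [Fin.sum_univ_three]
  simp only [wcol, gcol, dif_pos i.isLt, Fin.eta]
  by_cases h0 : (i, (0 : Fin 3)) ∈ D <;> by_cases h1 : (i, (1 : Fin 3)) ∈ D <;>
    by_cases h2 : (i, (2 : Fin 3)) ∈ D <;> simp [h0, h1, h2]

lemma lower {D : Finset (Fin n × Fin 3)} (hD : IsTotalDomSet (gridGraph n 3) ↑D) :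
    n ≤ D.card := by
  have hv := toValid hD n 0 (by omega)
  rw [show gp D 0 = (false, false, false) from rfl, show gU D 0 = (false, false, false) from rfl]
    at hv
  have hlen := validL_length' _ hv
  rw [List.length_map, List.length_range', List.map_map, ← List.range_eq_range',
    list_range_sum] at hlen
  rw [card_eq D]
  exact hlen

end TDGrid3

/-- The middle row of the grid `G_{n,3}`. -/
def midSet (n : ℕ) : Finset (Fin n × Fin 3) :=
  Finset.univ.image fun i : Fin n => (i, (1 : Fin 3))

lemma midSet_card (n : ℕ) : (midSet n).card = n := by
  rw [midSet, Finset.card_image_of_injective _ (fun a b h => (Prod.ext_iff.mp h).1)]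
  simp

lemma midSet_tds {n : ℕ} (hn : 2 ≤ n) : IsTotalDomSet (gridGraph n 3) ↑(midSet n) := by
  rintro ⟨i, j⟩
  by_cases hj : j = 1
  · subst hj
    by_cases hi : (i : ℕ) + 1 < n
    · refine ⟨(⟨(i : ℕ) + 1, hi⟩, 1), by simp [midSet], ?_⟩
      rw [gridGraph, boxProd_adj]
      exact Or.inl ⟨pathGraph_adj.mpr (Or.inl rfl), rfl⟩
    · have h1 : 1 ≤ (i : ℕ) := by have := i.isLt; omega
      refine ⟨(⟨(i : ℕ) - 1, by omega⟩, 1), by simp [midSet], ?_⟩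
      rw [gridGraph, boxProd_adj]
      exact Or.inl ⟨pathGraph_adj.mpr (Or.inr (by simp; omega)), rfl⟩
  · refine ⟨(i, 1), by simp [midSet], ?_⟩
    rw [gridGraph, boxProd_adj]
    refine Or.inr ⟨pathGraph_adj.mpr ?_, rfl⟩
    have hj3 := j.isLt
    have hjv : (j : ℕ) ≠ 1 := fun h => hj (Fin.ext h)
    have : (j : ℕ) = 0 ∨ (j : ℕ) = 2 := by omega
    rcases this with h | h
    · exact Or.inl (by simp [h])
    · exact Or.inr (by simp [h])

theorem total_domination_grid_three (n : ℕ) (hn : 2 ≤ n) :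
    totalDomNum (gridGraph n 3) = n := by
  rw [totalDomNum]
  have hmem : n ∈ {k | ∃ D : Finset (Fin n × Fin 3),
      IsTotalDomSet (gridGraph n 3) ↑D ∧ D.card = k} :=
    ⟨midSet n, midSet_tds hn, midSet_card n⟩
  refine le_antisymm (Nat.sInf_le hmem) ?_
  obtain ⟨D, hD, hcard⟩ := Nat.sInf_mem (Set.nonempty_of_mem hmem)
  rw [← hcard]
  exact TDGrid3.lower hD
end

section
/- Let D be a total dominating set of the grid graph G_{n,m} (m ≥ 2), and let 1 ≤ i ≤ n−1. Then γ_t(G_{i,m}) ≤ |D ∩ V(G_{i+1,m})|, where G_{i+1,m} is the subgraph of G_{n,m} induced by the vertices x_{kj} with 1 ≤ k ≤ i+1, 1 ≤ j ≤ m. -/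
open SimpleGraph

/-- Push a vertex of `G_{n,m}` in the first `i+1` rows into `G_{i,m}`:
rows `< i` stay put, row `i` is moved to row `i-1` with a sideways column shift. -/
def pushMap (n m i : ℕ) (hi1 : 1 ≤ i) (hm : 2 ≤ m) : Fin n × Fin m → Fin i × Fin m :=
  fun u =>
    if h : u.1.val < i then (⟨u.1.val, h⟩, u.2)
    else (⟨i - 1, by omega⟩,
      if h2 : u.2.val + 1 < m then ⟨u.2.val + 1, h2⟩
      else ⟨u.2.val - 1, by have := u.2.isLt; omega⟩)

theorem totalDomNum_le_card_inter (n m i : ℕ) (hm : 2 ≤ m) (hi1 : 1 ≤ i) (hi2 : i < n)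
    (D : Finset (Fin n × Fin m)) (hD : IsTotalDomSet (gridGraph n m) ↑D) :
    totalDomNum (gridGraph i m) ≤ (D.filter (fun v => v.1.val < i + 1)).card := by
  set f := pushMap n m i hi1 hm with hf
  set D' := D.filter (fun v => v.1.val < i + 1) with hD'
  have hdom : IsTotalDomSet (gridGraph i m) ↑(D'.image f) := by
    intro v
    obtain ⟨u, hu, hadj⟩ := hD (⟨⟨v.1.val, v.1.isLt.trans hi2⟩, v.2⟩)
    rw [gridGraph, boxProd_adj] at hadj
    by_cases hcase : u.1.val < i
    · refine ⟨f u, ?_, ?_⟩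
      · have huD' : u ∈ D' := by
          rw [hD', Finset.mem_filter]
          exact ⟨hu, by omega⟩
        exact Finset.mem_coe.mpr (Finset.mem_image_of_mem f huD')
      · rw [hf, pushMap]
        simp only [dif_pos hcase]
        rw [gridGraph, boxProd_adj]
        rcases hadj with ⟨h, he⟩ | ⟨h, he⟩
        · left
          rw [pathGraph_adj] at h ⊢
          exact ⟨by simpa using h, he⟩
        · right
          refine ⟨h, ?_⟩
          have : v.1.val = u.1.val := congrArg Fin.val he
          exact Fin.ext this
    · -- u is in row i, and v is in row i-1, same column
      have hui : u.1.val = i := by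
        rcases hadj with ⟨h, he⟩ | ⟨h, he⟩
        · rw [pathGraph_adj] at h
          have h1 := v.1.isLt
          have h2 := u.1.isLt
          simp only at h
          omega
        · have : v.1.val = u.1.val := congrArg Fin.val he
          have h1 := v.1.isLt
          omega
      have hv1 : v.1.val + 1 = i := by
        rcases hadj with ⟨h, he⟩ | ⟨h, he⟩
        · rw [pathGraph_adj] at h
          have h1 := v.1.isLt
          simp only at h
          omega
        · have : v.1.val = u.1.val := congrArg Fin.val he
          have h1 := v.1.isLt
          omega
      have hv2 : v.2 = u.2 := by
        rcases hadj with ⟨h, he⟩ | ⟨h, he⟩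
        · exact he
        · exfalso
          have : v.1.val = u.1.val := congrArg Fin.val he
          have h1 := v.1.isLt
          omega
      refine ⟨f u, ?_, ?_⟩
      · have huD' : u ∈ D' := by
          rw [hD', Finset.mem_filter]
          exact ⟨hu, by omega⟩
        exact Finset.mem_coe.mpr (Finset.mem_image_of_mem f huD')
      · rw [hf, pushMap]
        simp only [dif_neg hcase]
        rw [gridGraph, boxProd_adj]
        right
        constructor
        · rw [pathGraph_adj]
          by_cases h2 : u.2.val + 1 < m
          · simp only [dif_pos h2]
            left
            rw [hv2]
          · simp only [dif_neg h2]
            right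
            have := u.2.isLt
            rw [hv2]
            omega
        · exact Fin.ext (by simp; omega)
  have hmem : (D'.image f).card ∈ {k | ∃ E : Finset (Fin i × Fin m),
      IsTotalDomSet (gridGraph i m) ↑E ∧ E.card = k} := ⟨D'.image f, hdom, rfl⟩
  exact (Nat.sInf_le hmem).trans Finset.card_image_le
end

section
/- For a path P_n with n ≥ 4, the total bondage number is b_t(P_n) = 2 if n ≡ 2 (mod 4), and b_t(P_n) = 1 otherwise. -/
open SimpleGraph

open Finset

def fval (m : ℕ) : ℕ := (m+1)/2 + (if m % 4 = 2 then 1 else 0)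

def segSet (l m : ℕ) : Finset ℕ :=
  if _h1 : m < 6 then
    if m = 2 then {l, l+1}
    else if m = 3 then {l+1, l+2}
    else if m = 4 then {l+1, l+2}
    else if m = 5 then {l+1, l+2, l+3}
    else ∅
  else {l+1, l+2} ∪ segSet (l+4) (m-4)
termination_by m
decreasing_by omega

lemma segSet_bounds : ∀ m l x, x ∈ segSet l m → l ≤ x ∧ x < l + m := by
  intro m
  induction m using Nat.strong_induction_on with
  | _ m ih =>
    intro l x hx
    rw [segSet] at hx
    split_ifs at hx with h1 h2 h3 h4 h5
    · simp only [mem_insert, mem_singleton] at hx; omega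
    · simp only [mem_insert, mem_singleton] at hx; omega
    · simp only [mem_insert, mem_singleton] at hx; omega
    · simp only [mem_insert, mem_singleton] at hx; omega
    · simp at hx
    · rw [mem_union] at hx
      rcases hx with hx | hx
      · simp only [mem_insert, mem_singleton] at hx; omega
      · have := ih (m-4) (by omega) (l+4) x hx
        omega

lemma segSet_card : ∀ m l, 2 ≤ m → (segSet l m).card = fval m := by
  intro m
  induction m using Nat.strong_induction_on with
  | _ m ih =>
    intro l hm
    rw [segSet]
    split_ifs with h1 h2 h3 h4 h5
    · subst h2; rw [card_insert_of_notMem (by simp), card_singleton]; rfl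
    · subst h3; rw [card_insert_of_notMem (by simp), card_singleton]; rfl
    · subst h4; rw [card_insert_of_notMem (by simp), card_singleton]; rfl
    · subst h5
      rw [card_insert_of_notMem (by simp), card_insert_of_notMem (by simp),
        card_singleton]; rfl
    · omega
    · have hdisj : Disjoint ({l+1, l+2} : Finset ℕ) (segSet (l+4) (m-4)) := by
        rw [Finset.disjoint_left]
        intro x hx hx'
        have := segSet_bounds (m-4) (l+4) x hx'
        simp only [mem_insert, mem_singleton] at hx; omega
      rw [card_union_of_disjoint hdisj, ih (m-4) (by omega) (l+4) (by omega),
        card_insert_of_notMem (by simp), card_singleton]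
      simp only [fval]
      have : m % 4 = (m-4) % 4 := by omega
      split_ifs with hh hh' hh' <;> omega

lemma segSet_dom : ∀ m l j, 2 ≤ m → l ≤ j → j < l + m →
    ∃ x ∈ segSet l m, (x = j + 1 ∨ j = x + 1) := by
  intro m
  induction m using Nat.strong_induction_on with
  | _ m ih =>
    intro l j hm hlj hjm
    rw [segSet]
    split_ifs with h1 h2 h3 h4 h5
    · subst h2
      rcases (by omega : j = l ∨ j = l + 1) with h | h
      · exact ⟨l+1, by simp, by omega⟩
      · exact ⟨l, by simp, by omega⟩
    · subst h3
      rcases (by omega : j = l ∨ j = l + 1 ∨ j = l + 2) with h | h | h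
      · exact ⟨l+1, by simp, by omega⟩
      · exact ⟨l+2, by simp, by omega⟩
      · exact ⟨l+1, by simp, by omega⟩
    · subst h4
      rcases (by omega : j = l ∨ j = l + 1 ∨ j = l + 2 ∨ j = l + 3) with h | h | h | h
      · exact ⟨l+1, by simp, by omega⟩
      · exact ⟨l+2, by simp, by omega⟩
      · exact ⟨l+1, by simp, by omega⟩
      · exact ⟨l+2, by simp, by omega⟩
    · subst h5
      rcases (by omega : j = l ∨ j = l + 1 ∨ j = l + 2 ∨ j = l + 3 ∨ j = l + 4) with
        h | h | h | h | h
      · exact ⟨l+1, by simp, by omega⟩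
      · exact ⟨l+2, by simp, by omega⟩
      · exact ⟨l+1, by simp, by omega⟩
      · exact ⟨l+2, by simp, by omega⟩
      · exact ⟨l+3, by simp, by omega⟩
    · omega
    · by_cases hj : j ≤ l + 3
      · rcases (by omega : j = l ∨ j = l + 1 ∨ j = l + 2 ∨ j = l + 3) with h | h | h | h
        · exact ⟨l+1, by simp, by omega⟩
        · exact ⟨l+2, by simp, by omega⟩
        · exact ⟨l+1, by simp, by omega⟩
        · exact ⟨l+2, by simp, by omega⟩
      · obtain ⟨x, hx, hadj⟩ := ih (m-4) (by omega) (l+4) j (by omega) (by omega) (by omega)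
        exact ⟨x, by rw [mem_union]; exact Or.inr hx, hadj⟩

lemma card_le_two_vals {n : ℕ} {s : Finset (Fin n)} {c : ℕ}
    (h : ∀ v ∈ s, v.val + 1 = c ∨ c + 1 = v.val) : s.card ≤ 2 := by
  by_contra h'
  rw [not_le] at h'
  obtain ⟨a, b, d, ha, hb, hd, hab, had, hbd⟩ := Finset.two_lt_card_iff.mp h'
  have h1 := h a ha
  have h2 := h b hb
  have h3 := h d hd
  have e1 : a.val ≠ b.val := fun e => hab (Fin.val_injective e)
  have e2 : a.val ≠ d.val := fun e => had (Fin.val_injective e)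
  have e3 : b.val ≠ d.val := fun e => hbd (Fin.val_injective e)
  omega

lemma interval_card {n l r : ℕ} (hr : r ≤ n) :
    ((univ : Finset (Fin n)).filter fun v => l ≤ v.val ∧ v.val < r).card = r - l := by
  rw [← Nat.card_Ico l r]
  apply Finset.card_nbij (i := fun v => v.val)
  · intro a ha
    simp at ha
    simp [Finset.mem_Ico]
    omega
  · intro a _ b _ hab
    exact Fin.val_injective hab
  · intro j hj
    simp only [Finset.coe_Ico, Set.mem_Ico] at hj
    exact ⟨⟨j, by omega⟩, by simp [Set.mem_setOf_eq]; omega⟩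

lemma half_bound {n : ℕ} {G : SimpleGraph (Fin n)} {D : Finset (Fin n)}
    (hD : IsTotalDomSet G ↑D)
    (hdist : ∀ u v : Fin n, G.Adj u v → u.val + 1 = v.val ∨ v.val + 1 = u.val)
    {l r : ℕ} (hr : r ≤ n)
    (hbound : ∀ u v : Fin n, G.Adj u v → l ≤ u.val → u.val < r → l ≤ v.val ∧ v.val < r) :
    r - l ≤ 2 * (D.filter fun v => l ≤ v.val ∧ v.val < r).card := by
  classical
  set I : Finset (Fin n) := univ.filter (fun v => l ≤ v.val ∧ v.val < r) with hI
  set DI := D.filter (fun v => l ≤ v.val ∧ v.val < r) with hDI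
  have key : ∑ v ∈ I, (DI.filter (fun u => G.Adj v u)).card
      = ∑ u ∈ DI, (I.filter (fun v => G.Adj v u)).card := by
    simp_rw [Finset.card_filter]
    exact Finset.sum_comm
  have h1 : ∀ v ∈ I, 1 ≤ (DI.filter (fun u => G.Adj v u)).card := by
    intro v hv
    apply Finset.card_pos.mpr
    obtain ⟨u, hu, hadj⟩ := hD v
    rw [hI, mem_filter] at hv
    have hb := hbound v u hadj hv.2.1 hv.2.2
    exact ⟨u, by rw [mem_filter, hDI, mem_filter]; exact ⟨⟨Finset.mem_coe.mp hu, hb⟩, hadj⟩⟩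
  have h2 : ∀ u ∈ DI, (I.filter (fun v => G.Adj v u)).card ≤ 2 := by
    intro u _
    apply card_le_two_vals (c := u.val)
    intro v hv
    rw [mem_filter] at hv
    exact hdist v u hv.2
  calc r - l = I.card := (interval_card hr).symm
    _ = ∑ _v ∈ I, 1 := by simp
    _ ≤ ∑ v ∈ I, (DI.filter (fun u => G.Adj v u)).card := Finset.sum_le_sum h1
    _ = ∑ u ∈ DI, (I.filter (fun v => G.Adj v u)).card := key
    _ ≤ ∑ _u ∈ DI, 2 := Finset.sum_le_sum h2
    _ = 2 * DI.card := by rw [Finset.sum_const, smul_eq_mul, mul_comm]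

lemma two_mod_bound {n : ℕ} {G : SimpleGraph (Fin n)} {D : Finset (Fin n)}
    (hD : IsTotalDomSet G ↑D)
    (hdist : ∀ u v : Fin n, G.Adj u v → u.val + 1 = v.val ∨ v.val + 1 = u.val)
    {l r : ℕ} (hr : r ≤ n)
    (hbound : ∀ u v : Fin n, G.Adj u v → l ≤ u.val → u.val < r → l ≤ v.val ∧ v.val < r)
    (hmod : (r - l) % 4 = 2) (hlr : l < r)
    (hedge : ∀ u v : Fin n, l ≤ u.val → v.val < r → u.val + 1 = v.val → G.Adj u v) :
    r - l + 2 ≤ 2 * (D.filter fun v => l ≤ v.val ∧ v.val < r).card := by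
  classical
  by_contra hcon
  rw [not_le] at hcon
  have hhalf := half_bound hD hdist hr hbound
  set I : Finset (Fin n) := univ.filter (fun v => l ≤ v.val ∧ v.val < r) with hI
  set DI := D.filter (fun v => l ≤ v.val ∧ v.val < r) with hDI
  have hcard2 : 2 * DI.card = r - l := by omega
  have key : ∑ v ∈ I, (DI.filter (fun u => G.Adj v u)).card
      = ∑ u ∈ DI, (I.filter (fun v => G.Adj v u)).card := by
    simp_rw [Finset.card_filter]
    exact Finset.sum_comm
  have hImem : ∀ v : Fin n, l ≤ v.val → v.val < r → v ∈ I := by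
    intro v h1 h2
    rw [hI, mem_filter]
    exact ⟨mem_univ v, h1, h2⟩
  have hmemDI : ∀ u : Fin n, u ∈ DI → u ∈ D ∧ l ≤ u.val ∧ u.val < r := by
    intro u hu
    rw [hDI, mem_filter] at hu
    exact ⟨hu.1, hu.2⟩
  have hA : ∀ v ∈ I, ∃ u ∈ DI, G.Adj v u := by
    intro v hv
    obtain ⟨u, hu, hadj⟩ := hD v
    rw [hI, mem_filter] at hv
    have hb := hbound v u hadj hv.2.1 hv.2.2
    exact ⟨u, by rw [hDI, mem_filter]; exact ⟨Finset.mem_coe.mp hu, hb⟩, hadj⟩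
  have h1 : ∀ v ∈ I, 1 ≤ (DI.filter (fun u => G.Adj v u)).card := by
    intro v hv
    apply Finset.card_pos.mpr
    obtain ⟨u, hu, hadj⟩ := hA v hv
    exact ⟨u, mem_filter.mpr ⟨hu, hadj⟩⟩
  have h2 : ∀ u ∈ DI, (I.filter (fun v => G.Adj v u)).card ≤ 2 := by
    intro u _
    apply card_le_two_vals (c := u.val)
    intro v hv
    rw [mem_filter] at hv
    exact hdist v u hv.2
  have hIcard : I.card = r - l := interval_card hr
  have hsumI : ∑ _v ∈ I, 1 = I.card := by simp
  have hsumD : ∑ _u ∈ DI, 2 = 2 * DI.card := by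
    rw [Finset.sum_const, smul_eq_mul, mul_comm]
  have e1 : ∑ _v ∈ I, 1 ≤ ∑ v ∈ I, (DI.filter (fun u => G.Adj v u)).card :=
    Finset.sum_le_sum h1
  have e2 : ∑ u ∈ DI, (I.filter (fun v => G.Adj v u)).card ≤ ∑ _u ∈ DI, 2 :=
    Finset.sum_le_sum h2
  -- equalities
  have hsum1 : ∑ v ∈ I, (DI.filter (fun u => G.Adj v u)).card = I.card := by omega
  have hsum2 : ∑ u ∈ DI, (I.filter (fun v => G.Adj v u)).card = ∑ _u ∈ DI, 2 := by omega
  have hone : ∀ v ∈ I, (DI.filter (fun u => G.Adj v u)).card = 1 := by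
    intro v hv
    by_contra hne
    have hlt : ∑ _v ∈ I, 1 < ∑ v ∈ I, (DI.filter (fun u => G.Adj v u)).card :=
      Finset.sum_lt_sum h1 ⟨v, hv, by have := h1 v hv; omega⟩
    omega
  have hdeg : ∀ u ∈ DI, (I.filter (fun v => G.Adj v u)).card = 2 := by
    intro u hu
    by_contra hne
    have hlt : ∑ u ∈ DI, (I.filter (fun v => G.Adj v u)).card < ∑ _u ∈ DI, 2 :=
      Finset.sum_lt_sum h2 ⟨u, hu, by have := h2 u hu; omega⟩
    omega
  have hU : ∀ v ∈ I, ∀ u w : Fin n, u ∈ DI → w ∈ DI → G.Adj v u → G.Adj v w → u = w := by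
    intro v hv u w hu hw hau haw
    have h := Finset.card_eq_one.mp (hone v hv)
    obtain ⟨a, ha⟩ := h
    have h1' : u ∈ DI.filter (fun u => G.Adj v u) := mem_filter.mpr ⟨hu, hau⟩
    have h2' : w ∈ DI.filter (fun u => G.Adj v u) := mem_filter.mpr ⟨hw, haw⟩
    rw [ha, mem_singleton] at h1' h2'
    rw [h1', h2']
  have hDeg2 : ∀ u ∈ DI, l + 1 ≤ u.val ∧ u.val + 1 < r := by
    intro u hu
    have hd := hdeg u hu
    obtain ⟨_, hul, hur⟩ := hmemDI u hu
    constructor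
    · by_contra hcl
      have hval : u.val = l := by omega
      have hle1 : (I.filter (fun v => G.Adj v u)).card ≤ 1 := by
        apply Finset.card_le_one.mpr
        intro a ha b hb
        rw [mem_filter] at ha hb
        have hda := hdist a u ha.2
        have hdb := hdist b u hb.2
        have haI := (mem_filter.mp (by rw [hI] at ha; exact ha.1 : a ∈ univ.filter (fun v => l ≤ v.val ∧ v.val < r))).2
        have hbI := (mem_filter.mp (by rw [hI] at hb; exact hb.1 : b ∈ univ.filter (fun v => l ≤ v.val ∧ v.val < r))).2
        apply Fin.val_injective
        omega
      omega
    · by_contra hcr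
      have hval : u.val + 1 ≥ r := by omega
      have hle1 : (I.filter (fun v => G.Adj v u)).card ≤ 1 := by
        apply Finset.card_le_one.mpr
        intro a ha b hb
        rw [mem_filter] at ha hb
        have hda := hdist a u ha.2
        have hdb := hdist b u hb.2
        have haI := (mem_filter.mp (by rw [hI] at ha; exact ha.1 : a ∈ univ.filter (fun v => l ≤ v.val ∧ v.val < r))).2
        have hbI := (mem_filter.mp (by rw [hI] at hb; exact hb.1 : b ∈ univ.filter (fun v => l ≤ v.val ∧ v.val < r))).2
        apply Fin.val_injective
        omega
      omega
  obtain ⟨Q, hQ⟩ : ∃ Q, r - l = 4*Q + 2 := ⟨(r - l - 2)/4, by omega⟩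
  have main : ∀ k, k ≤ Q →
      (∃ u ∈ DI, u.val = l + 4*k + 1) ∧ (∀ u ∈ DI, u.val ≠ l + 4*k) := by
    intro k
    induction k with
    | zero =>
      intro _
      constructor
      · have hv0 : (⟨l, by omega⟩ : Fin n) ∈ I := hImem _ (by simp) (by simp; omega)
        obtain ⟨u, hu, hadj⟩ := hA _ hv0
        have hd := hdist _ u hadj
        simp only [Fin.val_mk] at hd
        have := (hmemDI u hu).2
        exact ⟨u, hu, by omega⟩
      · intro u hu
        have := (hDeg2 u hu).1
        omega
    | succ k ihk =>
      intro hk1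
      obtain ⟨⟨u1, hu1, hval1⟩, hnot0⟩ := ihk (by omega)
      have hx5 : l + 4*k + 5 ≤ r - 1 := by omega
      have hu1r := (hmemDI u1 hu1).2
      have hu1I : u1 ∈ I := hImem u1 hu1r.1 hu1r.2
      obtain ⟨u2, hu2, hadj12⟩ := hA u1 hu1I
      have hd12 := hdist u1 u2 hadj12
      have hval2 : u2.val = l + 4*k + 2 := by
        have := hnot0 u2 hu2
        omega
      have hu2r := (hmemDI u2 hu2).2
      have hu2I : u2 ∈ I := hImem u2 hu2r.1 hu2r.2
      have hnot3 : ∀ w ∈ DI, w.val ≠ l + 4*k + 3 := by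
        intro w hw hvalw
        have hadj2w : G.Adj u2 w :=
          hedge u2 w (by omega) ((hmemDI w hw).2.2) (by omega)
        have heq := hU u2 hu2I u1 w hu1 hw (G.adj_symm hadj12) hadj2w
        rw [heq] at hval1
        omega
      have hv3I : (⟨l + 4*k + 3, by omega⟩ : Fin n) ∈ I :=
        hImem _ (by simp; omega) (by simp; omega)
      have hadj23 : G.Adj u2 (⟨l + 4*k + 3, by omega⟩ : Fin n) :=
        hedge u2 _ (by omega) (by simp; omega) (by simp; omega)
      have hnot4 : ∀ w ∈ DI, w.val ≠ l + 4*k + 4 := by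
        intro w hw hvalw
        have hadj3w : G.Adj (⟨l + 4*k + 3, by omega⟩ : Fin n) w :=
          hedge _ w (by simp only [Fin.val_mk]; omega) ((hmemDI w hw).2.2) (by simp only [Fin.val_mk]; omega)
        have heq := hU _ hv3I u2 w hu2 hw (G.adj_symm hadj23) hadj3w
        rw [heq] at hval2
        omega
      have hv4I : (⟨l + 4*k + 4, by omega⟩ : Fin n) ∈ I :=
        hImem _ (by simp; omega) (by simp; omega)
      obtain ⟨u5, hu5, hadj45⟩ := hA _ hv4I
      have hd45 := hdist _ u5 hadj45
      simp only [Fin.val_mk] at hd45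
      have hval5 : u5.val = l + 4*k + 5 := by
        have := hnot3 u5 hu5
        omega
      refine ⟨⟨u5, hu5, by omega⟩, ?_⟩
      intro u hu hv
      exact hnot4 u hu (by omega)
  obtain ⟨⟨u, hu, hval⟩, -⟩ := main Q le_rfl
  have := (hDeg2 u hu).2
  omega

lemma totalDomNum_le_card {V : Type*} [Fintype V] {G : SimpleGraph V} {D : Finset V}
    (h : IsTotalDomSet G ↑D) : totalDomNum G ≤ D.card :=
  Nat.sInf_le ⟨D, h, rfl⟩

lemma totalDomNum_ge {n : ℕ} {G : SimpleGraph (Fin n)} (c : ℕ)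
    (hne : ∃ D : Finset (Fin n), IsTotalDomSet G ↑D)
    (h : ∀ D : Finset (Fin n), IsTotalDomSet G ↑D → c ≤ D.card) :
    c ≤ totalDomNum G := by
  obtain ⟨D0, hD0⟩ := hne
  have hne' : {k | ∃ D : Finset (Fin n), IsTotalDomSet G ↑D ∧ D.card = k}.Nonempty :=
    ⟨D0.card, D0, hD0, rfl⟩
  obtain ⟨D, hDdom, hcard⟩ := Nat.sInf_mem hne'
  show c ≤ sInf {k | ∃ D : Finset (Fin n), IsTotalDomSet G ↑D ∧ D.card = k}
  rw [← hcard]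
  exact h D hDdom

lemma filter_parts2 {n : ℕ} (D : Finset (Fin n)) {l1 r1 l2 r2 : ℕ} (h : r1 ≤ l2) :
    (D.filter fun v => l1 ≤ v.val ∧ v.val < r1).card
      + (D.filter fun v => l2 ≤ v.val ∧ v.val < r2).card ≤ D.card := by
  classical
  rw [← card_union_of_disjoint (by
    rw [Finset.disjoint_left]; intro a ha hb; rw [mem_filter] at ha hb; omega)]
  exact card_le_card (union_subset (filter_subset _ _) (filter_subset _ _))

lemma filter_parts3 {n : ℕ} (D : Finset (Fin n)) {l1 r1 l2 r2 l3 r3 : ℕ}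
    (h12 : r1 ≤ l2) (h23 : r2 ≤ l3) (h13 : r1 ≤ l3) :
    (D.filter fun v => l1 ≤ v.val ∧ v.val < r1).card
      + (D.filter fun v => l2 ≤ v.val ∧ v.val < r2).card
      + (D.filter fun v => l3 ≤ v.val ∧ v.val < r3).card ≤ D.card := by
  classical
  have h1 : Disjoint (D.filter fun v => l1 ≤ v.val ∧ v.val < r1)
      (D.filter fun v => l2 ≤ v.val ∧ v.val < r2) := by
    rw [Finset.disjoint_left]; intro a ha hb; rw [mem_filter] at ha hb; omega
  have h2 : Disjoint ((D.filter fun v => l1 ≤ v.val ∧ v.val < r1)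
      ∪ (D.filter fun v => l2 ≤ v.val ∧ v.val < r2))
      (D.filter fun v => l3 ≤ v.val ∧ v.val < r3) := by
    rw [Finset.disjoint_left]; intro a ha hb
    rw [mem_union, mem_filter, mem_filter] at ha
    rw [mem_filter] at hb; omega
  rw [← card_union_of_disjoint h1, ← card_union_of_disjoint h2]
  exact card_le_card (union_subset
    (union_subset (filter_subset _ _) (filter_subset _ _)) (filter_subset _ _))

lemma fval_add_eq {m1 m2 : ℕ} (h1 : 2 ≤ m1) (h2 : 2 ≤ m2) (h : (m1 + m2) % 4 = 2) :
    fval m1 + fval m2 = (m1 + m2)/2 + 1 := by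
  unfold fval; split_ifs <;> omega

/-- coverage of one interval part by `segSet`, inside a path with deleted edges
that don't touch the interior of the part -/
lemma dom_step {n : ℕ} {F : Set (Sym2 (Fin n))} {l m : ℕ} (hm : 2 ≤ m) (hln : l + m ≤ n)
    (hF : ∀ u v : Fin n, l ≤ u.val → v.val < l + m → u.val + 1 = v.val → s(u, v) ∉ F)
    (v : Fin n) (hv1 : l ≤ v.val) (hv2 : v.val < l + m) :
    ∃ x ∈ segSet l m, ∃ hx : x < n, ((pathGraph n).deleteEdges F).Adj v ⟨x, hx⟩ := by
  obtain ⟨x, hx, hadj⟩ := segSet_dom m l v.val hm hv1 hv2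
  have hb := segSet_bounds m l x hx
  refine ⟨x, hx, by omega, ?_⟩
  rw [deleteEdges_adj]
  constructor
  · rw [pathGraph_adj]; simp only [Fin.val_mk]; omega
  · rcases hadj with h | h
    · exact hF v ⟨x, by omega⟩ hv1 (by simp only [Fin.val_mk]; omega)
        (by simp only [Fin.val_mk]; omega)
    · rw [Sym2.eq_swap]
      exact hF ⟨x, by omega⟩ v (by simp only [Fin.val_mk]; omega) hv2
        (by simp only [Fin.val_mk]; omega)

lemma del_dist {n : ℕ} (F : Set (Sym2 (Fin n))) :
    ∀ u v : Fin n, ((pathGraph n).deleteEdges F).Adj u v →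
      u.val + 1 = v.val ∨ v.val + 1 = u.val :=
  fun _ _ h => pathGraph_adj.mp (deleteEdges_adj.mp h).1

lemma edge_eq_mk {n : ℕ} {u v : Fin n} {a b : ℕ} (ha : a < n) (hb : b < n)
    (h1 : u.val = a) (h2 : v.val = b) :
    s(u, v) = s((⟨a, ha⟩ : Fin n), (⟨b, hb⟩ : Fin n)) := by
  rw [show u = ⟨a, ha⟩ from Fin.ext h1, show v = ⟨b, hb⟩ from Fin.ext h2]

lemma edge_mk_vals {n : ℕ} {u v : Fin n} {a b : ℕ} {ha : a < n} {hb : b < n}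
    (h : s(u,v) = s((⟨a, ha⟩ : Fin n), (⟨b, hb⟩ : Fin n))) :
    (u.val = a ∧ v.val = b) ∨ (u.val = b ∧ v.val = a) := by
  rcases Sym2.eq_iff.mp h with ⟨h1, h2⟩ | ⟨h1, h2⟩
  · left; exact ⟨by rw [h1], by rw [h2]⟩
  · right; exact ⟨by rw [h1], by rw [h2]⟩

lemma cut_boundary {n c : ℕ} {F : Set (Sym2 (Fin n))} (hc1 : 1 ≤ c) (hcn : c < n)
    (hmem : s((⟨c-1, by omega⟩ : Fin n), (⟨c, hcn⟩ : Fin n)) ∈ F) :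
    ∀ u v : Fin n, ((pathGraph n).deleteEdges F).Adj u v → ¬(u.val < c ∧ c ≤ v.val) := by
  rintro u v hadj ⟨h1, h2⟩
  rw [deleteEdges_adj, pathGraph_adj] at hadj
  apply hadj.2
  rw [edge_eq_mk (a := c-1) (b := c) (by omega) hcn (by omega) (by omega)]
  exact hmem

lemma upper_one_part {n : ℕ} (F : Set (Sym2 (Fin n))) (hn : 2 ≤ n)
    (hF1 : ∀ u v : Fin n, u.val + 1 = v.val → s(u,v) ∉ F) :
    ∃ D : Finset (Fin n), IsTotalDomSet ((pathGraph n).deleteEdges F) ↑D ∧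
      D.card = fval n := by
  have hSb : ∀ x ∈ segSet 0 n, x < n := by
    intro x hx; have := segSet_bounds _ _ _ hx; omega
  refine ⟨(segSet 0 n).attachFin hSb, ?_, ?_⟩
  · intro v
    obtain ⟨x, hx, hxn, hadj⟩ := dom_step (F := F) (l := 0) (m := n) hn (by omega)
      (fun u w _ _ huw => hF1 u w huw) v (by omega) (by omega)
    exact ⟨⟨x, hxn⟩, Finset.mem_coe.mpr ((Finset.mem_attachFin _).mpr (by
      simp only [Fin.val_mk]; exact hx)), hadj⟩
  · rw [card_attachFin]; exact segSet_card _ _ hn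

lemma upper_two_parts {n c : ℕ} (F : Set (Sym2 (Fin n))) (hc : 2 ≤ c) (hcn : c + 2 ≤ n)
    (hF1 : ∀ u v : Fin n, u.val + 1 = v.val → v.val ≠ c → s(u,v) ∉ F) :
    ∃ D : Finset (Fin n), IsTotalDomSet ((pathGraph n).deleteEdges F) ↑D ∧
      D.card = fval c + fval (n - c) := by
  have hSb : ∀ x ∈ segSet 0 c ∪ segSet c (n - c), x < n := by
    intro x hx
    rcases mem_union.mp hx with h | h
    · have := segSet_bounds _ _ _ h; omega
    · have := segSet_bounds _ _ _ h; omega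
  refine ⟨(segSet 0 c ∪ segSet c (n-c)).attachFin hSb, ?_, ?_⟩
  · intro v
    by_cases hv : v.val < c
    · obtain ⟨x, hx, hxn, hadj⟩ := dom_step (F := F) (l := 0) (m := c) hc (by omega)
        (fun u w _ hw huw => hF1 u w huw (by omega)) v (by omega) (by omega)
      exact ⟨⟨x, hxn⟩, Finset.mem_coe.mpr ((Finset.mem_attachFin _).mpr (by
        simp only [Fin.val_mk]; exact mem_union_left _ hx)), hadj⟩
    · obtain ⟨x, hx, hxn, hadj⟩ := dom_step (F := F) (l := c) (m := n - c) (by omega) (by omega)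
        (fun u w hu _ huw => hF1 u w huw (by omega)) v (by omega) (by omega)
      exact ⟨⟨x, hxn⟩, Finset.mem_coe.mpr ((Finset.mem_attachFin _).mpr (by
        simp only [Fin.val_mk]; exact mem_union_right _ hx)), hadj⟩
  · rw [card_attachFin, card_union_of_disjoint (by
      rw [Finset.disjoint_left]; intro x hx hx'
      have := segSet_bounds _ _ _ hx
      have := segSet_bounds _ _ _ hx'; omega),
      segSet_card _ _ hc, segSet_card _ _ (by omega)]

lemma upper_three_parts {n : ℕ} (F : Set (Sym2 (Fin n))) (hn : 6 ≤ n)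
    (hF1 : ∀ u v : Fin n, u.val + 1 = v.val → v.val ≠ 2 → v.val ≠ 4 → s(u,v) ∉ F) :
    ∃ D : Finset (Fin n), IsTotalDomSet ((pathGraph n).deleteEdges F) ↑D ∧
      D.card = 4 + fval (n - 4) := by
  have hSb : ∀ x ∈ segSet 0 2 ∪ segSet 2 2 ∪ segSet 4 (n - 4), x < n := by
    intro x hx
    rcases mem_union.mp hx with h | h
    · rcases mem_union.mp h with h' | h' <;> · have := segSet_bounds _ _ _ h'; omega
    · have := segSet_bounds _ _ _ h; omega
  refine ⟨(segSet 0 2 ∪ segSet 2 2 ∪ segSet 4 (n-4)).attachFin hSb, ?_, ?_⟩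
  · intro v
    by_cases hv : v.val < 2
    · obtain ⟨x, hx, hxn, hadj⟩ := dom_step (F := F) (l := 0) (m := 2) le_rfl (by omega)
        (fun u w _ hw huw => hF1 u w huw (by omega) (by omega)) v (by omega) (by omega)
      exact ⟨⟨x, hxn⟩, Finset.mem_coe.mpr ((Finset.mem_attachFin _).mpr (by
        simp only [Fin.val_mk]; exact mem_union_left _ (mem_union_left _ hx))), hadj⟩
    · by_cases hv' : v.val < 4
      · obtain ⟨x, hx, hxn, hadj⟩ := dom_step (F := F) (l := 2) (m := 2) le_rfl (by omega)
          (fun u w hu hw huw => hF1 u w huw (by omega) (by omega)) v (by omega) (by omega)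
        exact ⟨⟨x, hxn⟩, Finset.mem_coe.mpr ((Finset.mem_attachFin _).mpr (by
          simp only [Fin.val_mk]; exact mem_union_left _ (mem_union_right _ hx))), hadj⟩
      · obtain ⟨x, hx, hxn, hadj⟩ := dom_step (F := F) (l := 4) (m := n - 4) (by omega) (by omega)
          (fun u w hu _ huw => hF1 u w huw (by omega) (by omega)) v (by omega) (by omega)
        exact ⟨⟨x, hxn⟩, Finset.mem_coe.mpr ((Finset.mem_attachFin _).mpr (by
          simp only [Fin.val_mk]; exact mem_union_right _ hx)), hadj⟩
  · rw [card_attachFin, card_union_of_disjoint (by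
      rw [Finset.disjoint_left]; intro x hx hx'
      rcases mem_union.mp hx with h | h <;>
        · have := segSet_bounds _ _ _ h
          have := segSet_bounds _ _ _ hx'; omega),
      card_union_of_disjoint (by
        rw [Finset.disjoint_left]; intro x hx hx'
        have := segSet_bounds _ _ _ hx
        have := segSet_bounds _ _ _ hx'; omega),
      segSet_card _ _ le_rfl, segSet_card _ _ le_rfl, segSet_card _ _ (by omega)]
    have : fval 2 = 2 := by decide
    omega

theorem total_bondage_path (n : ℕ) (hn : 4 ≤ n) :
    totalBondage (pathGraph n) = if n % 4 = 2 then 2 else 1 := by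
  classical
  -- upper bound for the intact path
  obtain ⟨D0, hD0dom, hD0card⟩ : ∃ D0 : Finset (Fin n),
      IsTotalDomSet (pathGraph n) ↑D0 ∧ D0.card = fval n := by
    obtain ⟨D0, h1, h2⟩ := upper_one_part (n := n) (∅ : Set (Sym2 (Fin n))) (by omega)
      (fun _ _ _ => Set.notMem_empty _)
    rw [deleteEdges_empty] at h1
    exact ⟨D0, h1, h2⟩
  have hP_le : totalDomNum (pathGraph n) ≤ fval n := hD0card ▸ totalDomNum_le_card hD0dom
  have hkey : totalBondage (pathGraph n) = sInf {k | ∃ F : Finset (Sym2 (Fin n)),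
      ↑F ⊆ (pathGraph n).edgeSet ∧ F.card = k ∧
      totalDomNum ((pathGraph n).deleteEdges ↑F) > totalDomNum (pathGraph n)} := rfl
  have h0 : 0 ∉ {k | ∃ F : Finset (Sym2 (Fin n)),
      ↑F ⊆ (pathGraph n).edgeSet ∧ F.card = k ∧
      totalDomNum ((pathGraph n).deleteEdges ↑F) > totalDomNum (pathGraph n)} := by
    rintro ⟨F, -, hc, hgt⟩
    rw [Finset.card_eq_zero] at hc
    subst hc
    rw [Finset.coe_empty, deleteEdges_empty] at hgt
    exact lt_irrefl _ hgt
  by_cases hmod : n % 4 = 2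
  · -- totalBondage = 2
    have hn6 : 6 ≤ n := by omega
    -- exact value of γ_t(P_n) from below
    have hP_ge : n/2 + 1 ≤ totalDomNum (pathGraph n) := by
      apply totalDomNum_ge _ ⟨D0, hD0dom⟩
      intro D hdom
      have hbd := two_mod_bound hdom (fun u v h => pathGraph_adj.mp h) (l := 0) (r := n)
        le_rfl (fun u v _ _ _ => ⟨Nat.zero_le _, v.isLt⟩) (by omega) (by omega)
        (fun u v _ _ huv => pathGraph_adj.mpr (Or.inl huv))
      rw [Finset.filter_true_of_mem (fun v _ => ⟨Nat.zero_le _, v.isLt⟩)] at hbd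
      omega
    -- the two-edge set F2
    have h1n : (1 : ℕ) < n := by omega
    have h2n : (2 : ℕ) < n := by omega
    have h3n : (3 : ℕ) < n := by omega
    have h4n : (4 : ℕ) < n := by omega
    have hmem2 : 2 ∈ {k | ∃ F : Finset (Sym2 (Fin n)),
        ↑F ⊆ (pathGraph n).edgeSet ∧ F.card = k ∧
        totalDomNum ((pathGraph n).deleteEdges ↑F) > totalDomNum (pathGraph n)} := by
      refine ⟨{s((⟨1, h1n⟩ : Fin n), (⟨2, h2n⟩ : Fin n)),
               s((⟨3, h3n⟩ : Fin n), (⟨4, h4n⟩ : Fin n))}, ?_, ?_, ?_⟩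
      · intro e he
        simp only [coe_insert, Set.mem_insert_iff, coe_singleton,
          Set.mem_singleton_iff] at he
        rcases he with rfl | rfl <;>
          · rw [mem_edgeSet, pathGraph_adj]
            exact Or.inl (by simp)
      · rw [card_insert_of_notMem (by
          simp only [mem_singleton]
          intro h
          rcases edge_mk_vals h with ⟨h1, h2⟩ | ⟨h1, h2⟩ <;>
            simp only [Fin.val_mk] at h1 h2 <;> omega), card_singleton]
      · set F2 : Set (Sym2 (Fin n)) := ↑({s((⟨1, h1n⟩ : Fin n), (⟨2, h2n⟩ : Fin n)),
               s((⟨3, h3n⟩ : Fin n), (⟨4, h4n⟩ : Fin n))} : Finset (Sym2 (Fin n))) with hF2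
        have hmemF : ∀ x : Sym2 (Fin n), x ∈ F2 ↔
            x = s((⟨1, h1n⟩ : Fin n), (⟨2, h2n⟩ : Fin n)) ∨
            x = s((⟨3, h3n⟩ : Fin n), (⟨4, h4n⟩ : Fin n)) := by
          intro x
          rw [hF2]
          simp only [coe_insert, Set.mem_insert_iff, coe_singleton, Set.mem_singleton_iff]
        have hpresent : ∀ u v : Fin n, u.val + 1 = v.val → v.val ≠ 2 → v.val ≠ 4 →
            s(u,v) ∉ F2 := by
          intro u v huv hv2 hv4 hmem
          rcases (hmemF _).mp hmem with h | h <;>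
            rcases edge_mk_vals h with ⟨h1, h2⟩ | ⟨h1, h2⟩ <;> omega
        obtain ⟨D2, hD2dom, hD2card⟩ := upper_three_parts F2 hn6 hpresent
        have hdist := del_dist F2
        have hcut2 := cut_boundary (c := 2) (F := F2) (by omega) h2n
          ((hmemF _).mpr (Or.inl rfl))
        have hcut4 := cut_boundary (c := 4) (F := F2) (by omega) h4n
          ((hmemF _).mpr (Or.inr rfl))
        have hlow : n/2 + 2 ≤ totalDomNum ((pathGraph n).deleteEdges F2) := by
          apply totalDomNum_ge _ ⟨D2, hD2dom⟩
          intro D hdom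
          have hb1 : ∀ u v : Fin n, ((pathGraph n).deleteEdges F2).Adj u v →
              0 ≤ u.val → u.val < 2 → 0 ≤ v.val ∧ v.val < 2 := by
            intro u v hadj _ hu2
            have := hcut2 u v hadj
            exact ⟨Nat.zero_le _, by omega⟩
          have hb2 : ∀ u v : Fin n, ((pathGraph n).deleteEdges F2).Adj u v →
              2 ≤ u.val → u.val < 4 → 2 ≤ v.val ∧ v.val < 4 := by
            intro u v hadj hu2 hu4
            have := hcut2 v u (((pathGraph n).deleteEdges F2).adj_symm hadj)
            have := hcut4 u v hadj
            omega
          have hb3 : ∀ u v : Fin n, ((pathGraph n).deleteEdges F2).Adj u v →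
              4 ≤ u.val → u.val < n → 4 ≤ v.val ∧ v.val < n := by
            intro u v hadj hu4 _
            have := hcut4 v u (((pathGraph n).deleteEdges F2).adj_symm hadj)
            exact ⟨by omega, v.isLt⟩
          have hedge : ∀ u v : Fin n, u.val + 1 = v.val → v.val ≠ 2 → v.val ≠ 4 →
              ((pathGraph n).deleteEdges F2).Adj u v := by
            intro u v huv h2 h4
            rw [deleteEdges_adj]
            exact ⟨pathGraph_adj.mpr (Or.inl huv), hpresent u v huv h2 h4⟩
          have c1 := two_mod_bound hdom hdist (l := 0) (r := 2) (by omega) hb1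
            (by norm_num) (by omega) (fun u v _ hv huv => hedge u v huv (by omega) (by omega))
          have c2 := two_mod_bound hdom hdist (l := 2) (r := 4) (by omega) hb2
            (by norm_num) (by omega) (fun u v hu hv huv => hedge u v huv (by omega) (by omega))
          have c3 := two_mod_bound hdom hdist (l := 4) (r := n) le_rfl hb3
            (by omega) (by omega) (fun u v hu _ huv => hedge u v huv (by omega) (by omega))
          have hsplit := filter_parts3 D (l1 := 0) (r1 := 2) (l2 := 2) (r2 := 4)
            (l3 := 4) (r3 := n) le_rfl le_rfl (by omega)
          omega
        have hfval : fval n = n/2 + 1 := by unfold fval; rw [if_pos hmod]; omega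
        omega
    -- no single edge works
    have h1notmem : 1 ∉ {k | ∃ F : Finset (Sym2 (Fin n)),
        ↑F ⊆ (pathGraph n).edgeSet ∧ F.card = k ∧
        totalDomNum ((pathGraph n).deleteEdges ↑F) > totalDomNum (pathGraph n)} := by
      rintro ⟨F, hsub, hc, hgt⟩
      obtain ⟨e, rfl⟩ := Finset.card_eq_one.mp hc
      have he : e ∈ (pathGraph n).edgeSet := hsub (by simp)
      induction e using Sym2.ind with
      | _ u v =>
      rw [mem_edgeSet, pathGraph_adj] at he
      obtain ⟨a, han, hFa⟩ : ∃ a, ∃ han : a + 1 < n,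
          ({s(u,v)} : Finset (Sym2 (Fin n)))
            = {s((⟨a, by omega⟩ : Fin n), (⟨a+1, han⟩ : Fin n))} := by
        rcases he with h | h
        · refine ⟨u.val, by omega, ?_⟩
          rw [edge_eq_mk (a := u.val) (b := u.val + 1) (by omega) (by omega) rfl (by omega)]
        · refine ⟨v.val, by omega, ?_⟩
          rw [Sym2.eq_swap (a := u) (b := v),
            edge_eq_mk (a := v.val) (b := v.val + 1) (by omega) (by omega) rfl (by omega)]
      rw [hFa] at hgt
      set Fe : Set (Sym2 (Fin n)) :=
        ↑({s((⟨a, by omega⟩ : Fin n), (⟨a+1, han⟩ : Fin n))} : Finset (Sym2 (Fin n))) with hFe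
      have hmemFe : ∀ x : Sym2 (Fin n), x ∈ Fe ↔
          x = s((⟨a, by omega⟩ : Fin n), (⟨a+1, han⟩ : Fin n)) := by
        intro x; rw [hFe]; simp only [coe_singleton, Set.mem_singleton_iff]
      rcases (by omega : a = 0 ∨ a = n - 2 ∨ (1 ≤ a ∧ a + 3 ≤ n)) with ha | ha | ha
      · -- vertex 0 isolated
        subst ha
        have hempty : {k | ∃ D : Finset (Fin n),
            IsTotalDomSet ((pathGraph n).deleteEdges Fe) ↑D ∧ D.card = k} = ∅ := by
          ext k
          simp only [Set.mem_setOf_eq, Set.mem_empty_iff_false, iff_false]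
          rintro ⟨D, hdom, -⟩
          obtain ⟨w, -, hadj⟩ := hdom ⟨0, by omega⟩
          rw [deleteEdges_adj, pathGraph_adj] at hadj
          obtain ⟨hpa, hni⟩ := hadj
          simp only [Fin.val_mk] at hpa
          apply hni
          rw [hmemFe]
          exact edge_eq_mk _ _ rfl (by omega)
        have hzero : totalDomNum ((pathGraph n).deleteEdges Fe) = 0 := by
          unfold totalDomNum
          rw [hempty, Nat.sInf_empty]
        rw [hzero] at hgt
        omega
      · -- vertex n-1 isolated
        have hempty : {k | ∃ D : Finset (Fin n),
            IsTotalDomSet ((pathGraph n).deleteEdges Fe) ↑D ∧ D.card = k} = ∅ := by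
          ext k
          simp only [Set.mem_setOf_eq, Set.mem_empty_iff_false, iff_false]
          rintro ⟨D, hdom, -⟩
          obtain ⟨w, -, hadj⟩ := hdom ⟨n-1, by omega⟩
          rw [deleteEdges_adj, pathGraph_adj] at hadj
          obtain ⟨hpa, hni⟩ := hadj
          simp only [Fin.val_mk] at hpa
          have hwv : w.val = n - 2 := by have := w.isLt; omega
          apply hni
          rw [hmemFe, Sym2.eq_swap]
          exact edge_eq_mk _ _ (by omega) (by simp only [Fin.val_mk]; omega)
        have hzero : totalDomNum ((pathGraph n).deleteEdges Fe) = 0 := by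
          unfold totalDomNum
          rw [hempty, Nat.sInf_empty]
        rw [hzero] at hgt
        omega
      · -- middle edge: no increase
        have hpresent : ∀ u' v' : Fin n, u'.val + 1 = v'.val → v'.val ≠ a + 1 →
            s(u',v') ∉ Fe := by
          intro u' v' huv hva hmem
          rcases edge_mk_vals ((hmemFe _).mp hmem) with ⟨h1, h2⟩ | ⟨h1, h2⟩ <;> omega
        obtain ⟨De, hDedom, hDecard⟩ := upper_two_parts (c := a + 1) Fe (by omega)
          (by omega) hpresent
        have hle : totalDomNum ((pathGraph n).deleteEdges Fe) ≤ n/2 + 1 := by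
          have := totalDomNum_le_card hDedom
          rw [hDecard, fval_add_eq (by omega) (by omega) (by omega)] at this
          have : (a + 1 + (n - (a+1)))/2 + 1 = n/2 + 1 := by omega
          omega
        omega
    -- conclude: sInf = 2
    rw [if_pos hmod, hkey]
    have hne : {k | ∃ F : Finset (Sym2 (Fin n)),
        ↑F ⊆ (pathGraph n).edgeSet ∧ F.card = k ∧
        totalDomNum ((pathGraph n).deleteEdges ↑F) > totalDomNum (pathGraph n)}.Nonempty :=
      ⟨2, hmem2⟩
    have hsmem := Nat.sInf_mem hne
    have hle := Nat.sInf_le hmem2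
    rcases (by omega : sInf {k | ∃ F : Finset (Sym2 (Fin n)),
        ↑F ⊆ (pathGraph n).edgeSet ∧ F.card = k ∧
        totalDomNum ((pathGraph n).deleteEdges ↑F) > totalDomNum (pathGraph n)} = 0 ∨
        sInf {k | ∃ F : Finset (Sym2 (Fin n)),
        ↑F ⊆ (pathGraph n).edgeSet ∧ F.card = k ∧
        totalDomNum ((pathGraph n).deleteEdges ↑F) > totalDomNum (pathGraph n)} = 1 ∨
        sInf {k | ∃ F : Finset (Sym2 (Fin n)),
        ↑F ⊆ (pathGraph n).edgeSet ∧ F.card = k ∧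
        totalDomNum ((pathGraph n).deleteEdges ↑F) > totalDomNum (pathGraph n)} = 2) with
      h | h | h
    · rw [h] at hsmem; exact absurd hsmem h0
    · rw [h] at hsmem; exact absurd hsmem h1notmem
    · exact h
  · -- totalBondage = 1
    have h1n : (1 : ℕ) < n := by omega
    have h2n : (2 : ℕ) < n := by omega
    have hmem1 : 1 ∈ {k | ∃ F : Finset (Sym2 (Fin n)),
        ↑F ⊆ (pathGraph n).edgeSet ∧ F.card = k ∧
        totalDomNum ((pathGraph n).deleteEdges ↑F) > totalDomNum (pathGraph n)} := by
      refine ⟨{s((⟨1, h1n⟩ : Fin n), (⟨2, h2n⟩ : Fin n))}, ?_, by simp, ?_⟩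
      · intro e he
        simp only [coe_singleton, Set.mem_singleton_iff] at he
        subst he
        rw [mem_edgeSet, pathGraph_adj]
        exact Or.inl (by simp)
      · set F1 : Set (Sym2 (Fin n)) :=
          ↑({s((⟨1, h1n⟩ : Fin n), (⟨2, h2n⟩ : Fin n))} : Finset (Sym2 (Fin n))) with hF1
        have hmemF : ∀ x : Sym2 (Fin n), x ∈ F1 ↔
            x = s((⟨1, h1n⟩ : Fin n), (⟨2, h2n⟩ : Fin n)) := by
          intro x; rw [hF1]; simp only [coe_singleton, Set.mem_singleton_iff]
        have hpresent : ∀ u v : Fin n, u.val + 1 = v.val → v.val ≠ 2 →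
            s(u,v) ∉ F1 := by
          intro u v huv hv2 hmem
          rcases edge_mk_vals ((hmemF _).mp hmem) with ⟨h1, h2⟩ | ⟨h1, h2⟩ <;> omega
        obtain ⟨D1, hD1dom, -⟩ := upper_two_parts (c := 2) F1 le_rfl (by omega) hpresent
        have hdist := del_dist F1
        have hcut2 := cut_boundary (c := 2) (F := F1) (by omega) h2n
          ((hmemF _).mpr rfl)
        have hlow : fval n + 1 ≤ totalDomNum ((pathGraph n).deleteEdges F1) := by
          apply totalDomNum_ge _ ⟨D1, hD1dom⟩
          intro D hdom
          have hb1 : ∀ u v : Fin n, ((pathGraph n).deleteEdges F1).Adj u v →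
              0 ≤ u.val → u.val < 2 → 0 ≤ v.val ∧ v.val < 2 := by
            intro u v hadj _ hu2
            have := hcut2 u v hadj
            exact ⟨Nat.zero_le _, by omega⟩
          have hb2 : ∀ u v : Fin n, ((pathGraph n).deleteEdges F1).Adj u v →
              2 ≤ u.val → u.val < n → 2 ≤ v.val ∧ v.val < n := by
            intro u v hadj hu2 _
            have := hcut2 v u (((pathGraph n).deleteEdges F1).adj_symm hadj)
            exact ⟨by omega, v.isLt⟩
          have hedge : ∀ u v : Fin n, u.val + 1 = v.val → v.val ≠ 2 →
              ((pathGraph n).deleteEdges F1).Adj u v := by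
            intro u v huv h2
            rw [deleteEdges_adj]
            exact ⟨pathGraph_adj.mpr (Or.inl huv), hpresent u v huv h2⟩
          have c1 := two_mod_bound hdom hdist (l := 0) (r := 2) (by omega) hb1
            (by norm_num) (by omega) (fun u v _ hv huv => hedge u v huv (by omega))
          have hsplit := filter_parts2 D (l1 := 0) (r1 := 2) (l2 := 2) (r2 := n) le_rfl
          by_cases h4 : n % 4 = 0
          · have c2 := two_mod_bound hdom hdist (l := 2) (r := n) le_rfl hb2
              (by omega) (by omega) (fun u v hu _ huv => hedge u v huv (by omega))
            simp only [fval, if_neg hmod]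
            omega
          · have c2 := half_bound hdom hdist (l := 2) (r := n) le_rfl hb2
            simp only [fval, if_neg hmod]
            omega
        omega
    rw [if_neg hmod, hkey]
    have hne : {k | ∃ F : Finset (Sym2 (Fin n)),
        ↑F ⊆ (pathGraph n).edgeSet ∧ F.card = k ∧
        totalDomNum ((pathGraph n).deleteEdges ↑F) > totalDomNum (pathGraph n)}.Nonempty :=
      ⟨1, hmem1⟩
    have hsmem := Nat.sInf_mem hne
    have hle := Nat.sInf_le hmem1
    rcases (by omega : sInf {k | ∃ F : Finset (Sym2 (Fin n)),
        ↑F ⊆ (pathGraph n).edgeSet ∧ F.card = k ∧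
        totalDomNum ((pathGraph n).deleteEdges ↑F) > totalDomNum (pathGraph n)} = 0 ∨
        sInf {k | ∃ F : Finset (Sym2 (Fin n)),
        ↑F ⊆ (pathGraph n).edgeSet ∧ F.card = k ∧
        totalDomNum ((pathGraph n).deleteEdges ↑F) > totalDomNum (pathGraph n)} = 1) with
      h | h
    · rw [h] at hsmem; exact absurd hsmem h0
    · exact h
end

section
/- Let D be a minimum total dominating set of G_{n,3} (n ≥ 2) and let Y_1 = {x_{1j} : 1 ≤ j ≤ 3} and Y_n = {x_{nj} : 1 ≤ j ≤ 3} be the first and last columns. Then |D ∩ Y_1| ≤ 2 and |D ∩ Y_n| ≤ 2. -/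
open SimpleGraph

lemma path3_adj_one (j : Fin 3) (hj : j = 0 ∨ j = 2) : (pathGraph 3).Adj j 1 := by
  rw [pathGraph_adj]; rcases hj with h | h <;> subst h <;> simp

lemma path3_nbr_end (x j : Fin 3) (hj : j = 0 ∨ j = 2) (h : (pathGraph 3).Adj x j) :
    x = 1 := by
  rw [pathGraph_adj] at h
  rcases hj with h' | h' <;> subst h' <;> (apply Fin.ext; omega)

/-- Key replacement lemma: if all of column `a` (an end row) lies in `D`,
we can build a strictly smaller total dominating set. -/
lemma key (n : ℕ) (D : Finset (Fin n × Fin 3)) (hD : IsTotalDomSet (gridGraph n 3) ↑D)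
    (a b : Fin n) (hab : (pathGraph n).Adj a b)
    (hend : ∀ c : Fin n, (pathGraph n).Adj c a → c = b)
    (h0 : (a, 0) ∈ D) (h1 : (a, 1) ∈ D) (h2 : (a, 2) ∈ D) :
    ∃ D' : Finset (Fin n × Fin 3), IsTotalDomSet (gridGraph n 3) ↑D' ∧ D'.card < D.card := by
  refine ⟨insert (b, 1) ((D.erase (a, 0)).erase (a, 2)), ?_, ?_⟩
  · intro v
    obtain ⟨u, hu, huv⟩ := hD v
    by_cases hu0 : u = (a, 0) ∨ u = (a, 2)
    · -- v is a neighbor of (a,0) or (a,2); (b,1) dominates it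
      refine ⟨(b, 1), by simp, ?_⟩
      obtain hj : ∃ j : Fin 3, (j = 0 ∨ j = 2) ∧ u = (a, j) := by
        rcases hu0 with h | h
        · exact ⟨0, Or.inl rfl, h⟩
        · exact ⟨2, Or.inr rfl, h⟩
      obtain ⟨j, hj02, rfl⟩ := hj
      rw [gridGraph, boxProd_adj] at huv ⊢
      rcases huv with ⟨h, hc⟩ | ⟨h, hc⟩
      · -- v.1 adj a, v.2 = j
        have : v.1 = b := hend v.1 h
        exact Or.inr ⟨by rw [hc]; exact path3_adj_one j hj02, this⟩
      · -- v.2 adj j, v.1 = a : v.2 = 1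
        have hv2 : v.2 = 1 := path3_nbr_end v.2 j hj02 h
        exact Or.inl ⟨by rw [hc]; exact hab, hv2⟩
    · push_neg at hu0
      exact ⟨u, by simp [hu0.1, hu0.2, hu], huv⟩
  · have h02 : (a, (0 : Fin 3)) ≠ (a, 2) := by simp
    have hcard : ((D.erase (a, 0)).erase (a, 2)).card = D.card - 2 := by
      rw [Finset.card_erase_of_mem, Finset.card_erase_of_mem h0]
      · omega
      · exact Finset.mem_erase.mpr ⟨h02.symm, h2⟩
    have h2le : 2 ≤ D.card := by
      have := Finset.card_le_card (Finset.insert_subset h0 (Finset.singleton_subset_iff.mpr h2))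
      simpa [h02] using this
    calc (insert (b, 1) ((D.erase (a, 0)).erase (a, 2))).card
        ≤ ((D.erase (a, 0)).erase (a, 2)).card + 1 := Finset.card_insert_le _ _
      _ < D.card := by omega

lemma col_le (n : ℕ) (D : Finset (Fin n × Fin 3)) (hD : IsTotalDomSet (gridGraph n 3) ↑D)
    (hmin : D.card = totalDomNum (gridGraph n 3)) (a b : Fin n)
    (hab : (pathGraph n).Adj a b) (hend : ∀ c : Fin n, (pathGraph n).Adj c a → c = b) :
    (D.filter (fun v => v.1.val = a.val)).card ≤ 2 := by
  by_contra h
  push_neg at h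
  set S : Finset (Fin n × Fin 3) := {(a, 0), (a, 1), (a, 2)} with hS
  have hsub : D.filter (fun v => v.1.val = a.val) ⊆ S := by
    intro v hv
    rw [Finset.mem_filter] at hv
    obtain ⟨v1, v2⟩ := v
    have hv1 : v1 = a := Fin.ext hv.2
    subst hv1
    fin_cases v2 <;> simp [hS]
  have hScard : S.card = 3 := by
    rw [hS, Finset.card_insert_of_notMem (by simp), Finset.card_insert_of_notMem (by simp),
      Finset.card_singleton]
  have heq : D.filter (fun v => v.1.val = a.val) = S :=
    Finset.eq_of_subset_of_card_le hsub (by omega)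
  have hSD : S ⊆ D := heq ▸ Finset.filter_subset _ D
  obtain ⟨D', hTDS, hlt⟩ := key n D hD a b hab hend
    (hSD (by simp [hS])) (hSD (by simp [hS])) (hSD (by simp [hS]))
  have hle : totalDomNum (gridGraph n 3) ≤ D'.card := Nat.sInf_le ⟨D', hTDS, rfl⟩
  omega

theorem grid_three_min_tds_columns (n : ℕ) (hn : 2 ≤ n) (D : Finset (Fin n × Fin 3))
    (hD : IsTotalDomSet (gridGraph n 3) ↑D) (hmin : D.card = totalDomNum (gridGraph n 3)) :
    (D.filter (fun v => v.1.val = 0)).card ≤ 2 ∧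
    (D.filter (fun v => v.1.val = n - 1)).card ≤ 2 := by
  constructor
  · exact col_le n D hD hmin ⟨0, by omega⟩ ⟨1, by omega⟩
      (by rw [pathGraph_adj]; simp)
      (fun c hc => by rw [pathGraph_adj] at hc; apply Fin.ext; simp at hc ⊢; omega)
  · exact col_le n D hD hmin ⟨n - 1, by omega⟩ ⟨n - 2, by omega⟩
      (by rw [pathGraph_adj]; simp; omega)
      (fun c hc => by
        rw [pathGraph_adj] at hc
        have := c.isLt
        apply Fin.ext; simp at hc ⊢; omega)
end

section
/- Let D be a total dominating set of G_{n,3} (n ≥ 2). If at least one of the corner vertices x_{n1} and x_{n3} belongs to D, then |D| ≥ n + 1. -/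
open SimpleGraph

lemma grid_adj_iff {n : ℕ} (v u : Fin n × Fin 3) :
    (gridGraph n 3).Adj v u ↔
      (((v.1 : ℕ) + 1 = u.1 ∨ (u.1 : ℕ) + 1 = v.1) ∧ (v.2 : ℕ) = u.2) ∨
      (((v.2 : ℕ) + 1 = u.2 ∨ (u.2 : ℕ) + 1 = v.2) ∧ (v.1 : ℕ) = u.1) := by
  simp [gridGraph, boxProd_adj, pathGraph_adj, Fin.ext_iff, and_comm]


theorem grid_three_tds_with_corner (n : ℕ) (hn : 2 ≤ n) (D : Finset (Fin n × Fin 3))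
    (hD : IsTotalDomSet (gridGraph n 3) ↑D)
    (hcorner : ((⟨n - 1, by omega⟩ : Fin n), (0 : Fin 3)) ∈ D ∨
               ((⟨n - 1, by omega⟩ : Fin n), (2 : Fin 3)) ∈ D) :
    n + 1 ≤ D.card := by
  classical
  set G := gridGraph n 3 with hG
  set S : Finset (Fin n × Fin 3) := Finset.univ ×ˢ ({0, 2} : Finset (Fin 3)) with hS
  have hmemS : ∀ v : Fin n × Fin 3, v ∈ S ↔ ((v.2 : ℕ) = 0 ∨ (v.2 : ℕ) = 2) := by
    intro v
    rw [hS]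
    simp only [Finset.mem_product, Finset.mem_univ, true_and, Finset.mem_insert, Finset.mem_singleton, Fin.ext_iff]
    rfl
  have hScard : S.card = n * 2 := by
    simp [hS]
  -- each u dominates at most 2 side vertices
  have claim1 : ∀ u : Fin n × Fin 3, (S.filter (fun v => G.Adj v u)).card ≤ 2 := by
    intro u
    have : (S.filter (fun v => G.Adj v u)).card ≤ (Finset.univ : Finset Bool).card := by
      apply Finset.card_le_card_of_injOn
        (fun v => decide ((v.1 : ℕ) < u.1 ∨ (v.2 : ℕ) < u.2))
      · intro a _; exact Finset.mem_univ _
      · intro v hv w hw h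
        simp only [Finset.mem_coe, Finset.mem_filter, hmemS, hG, grid_adj_iff] at hv hw
        rw [decide_eq_decide] at h
        have h2 : (u.2 : ℕ) < 3 := u.2.isLt
        have := v.2.isLt; have := w.2.isLt
        have hv1 : (v.1 : ℕ) = w.1 ∧ (v.2 : ℕ) = w.2 := by omega
        exact Prod.ext (Fin.ext hv1.1) (Fin.ext hv1.2)
    simpa using this
  -- a last-column corner dominates at most 1 side vertex
  have claim2 : ∀ u : Fin n × Fin 3, (u.1 : ℕ) = n - 1 → ((u.2 : ℕ) = 0 ∨ (u.2 : ℕ) = 2) →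
      (S.filter (fun v => G.Adj v u)).card ≤ 1 := by
    intro u hu1 hu2
    apply Finset.card_le_one.2
    intro v hv w hw
    simp only [Finset.mem_filter, hmemS, hG, grid_adj_iff] at hv hw
    have := v.1.isLt; have := w.1.isLt
    have := v.2.isLt; have := w.2.isLt
    have hv1 : (v.1 : ℕ) = w.1 ∧ (v.2 : ℕ) = w.2 := by omega
    exact Prod.ext (Fin.ext hv1.1) (Fin.ext hv1.2)
  -- double counting
  have key : ∑ v ∈ S, (D.filter (fun u => G.Adj v u)).card
      = ∑ u ∈ D, (S.filter (fun v => G.Adj v u)).card := by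
    simp_rw [Finset.card_filter]
    exact Finset.sum_comm
  have lower : S.card ≤ ∑ v ∈ S, (D.filter (fun u => G.Adj v u)).card := by
    have := Finset.card_nsmul_le_sum S (fun v => (D.filter (fun u => G.Adj v u)).card) 1 ?_
    · simpa using this
    · intro v _
      obtain ⟨u, hu, hadj⟩ := hD v
      have : u ∈ D.filter (fun u => G.Adj v u) := Finset.mem_filter.2 ⟨hu, hadj⟩
      exact Finset.card_pos.2 ⟨u, this⟩
  -- corner
  obtain ⟨c, hcD, hc1, hc2⟩ : ∃ c : Fin n × Fin 3, c ∈ D ∧ (c.1 : ℕ) = n - 1 ∧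
      ((c.2 : ℕ) = 0 ∨ (c.2 : ℕ) = 2) := by
    rcases hcorner with h | h
    · exact ⟨_, h, rfl, Or.inl rfl⟩
    · exact ⟨_, h, rfl, Or.inr rfl⟩
  have upper : ∑ u ∈ D, (S.filter (fun v => G.Adj v u)).card ≤ 1 + 2 * (D.card - 1) := by
    rw [← Finset.add_sum_erase _ _ hcD]
    have h1 := claim2 c hc1 hc2
    have h2 : ∑ u ∈ D.erase c, (S.filter (fun v => G.Adj v u)).card
        ≤ (D.erase c).card * 2 := by
      have := Finset.sum_le_card_nsmul (D.erase c)
        (fun u => (S.filter (fun v => G.Adj v u)).card) 2 (fun u _ => claim1 u)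
      simpa [mul_comm] using this
    have h3 : (D.erase c).card = D.card - 1 := Finset.card_erase_of_mem hcD
    omega
  have hDpos : 1 ≤ D.card := Finset.card_pos.2 ⟨c, hcD⟩
  omega
end
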